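/- arXiv:2202.05510 — 9 statements merged into one kernel-verified Lean document; each statement's English description precedes it below -/
import Mathlib

section
/- Suppose y_i > 0 for all i, and suppose there exists w*_{GM} ∈ ℝ^d with ⟨w*_{GM}, x_i⟩ = y_i for all i (so the ReLU loss vanishes at w*_{GM} with all data activated). Let w : [0,∞) → ℝ^d be a gradient flow of the ReLU loss with initial point w_0 = w(0). Then for every index j with x_j ≠ 0, ⟨w_0, x_j⟩ > 0, and y_j / ‖x_j‖ > ‖w_0 − w*_{GM}‖, the data point x_j stays activated along the whole flow: ⟨w(t), x_j⟩ > 0 for all t ≥ 0. -/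
open MeasureTheory Set

/-- If `g` satisfies a quadratic increment bound on `[0, T]`, then `g T ≤ g 0`. -/
private lemma quad_telescope {g : ℝ → ℝ} {C T : ℝ} (hC : 0 ≤ C) (hT : 0 ≤ T)
    (h : ∀ a b : ℝ, 0 ≤ a → a ≤ b → b ≤ T → g b ≤ g a + C * (b - a) ^ 2) :
    g T ≤ g 0 := by
  have key : ∀ N : ℕ, g T ≤ g 0 + C * T ^ 2 / (N + 1) := by
    intro N
    have hN1 : (0:ℝ) < (N:ℝ) + 1 := by positivity
    set δ : ℝ := T / ((N:ℝ) + 1) with hδ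
    have hδ0 : 0 ≤ δ := div_nonneg hT hN1.le
    have hstep : ∀ k : ℕ, k ≤ N + 1 → g ((k:ℝ) * δ) ≤ g 0 + (k:ℝ) * (C * δ ^ 2) := by
      intro k hk
      induction k with
      | zero => simp
      | succ m ih =>
        have hm : m ≤ N + 1 := Nat.le_of_succ_le hk
        have hmle : ((m:ℝ) + 1) ≤ (N:ℝ) + 1 := by exact_mod_cast hk
        have h1 : (0:ℝ) ≤ (m:ℝ) * δ := by positivity
        have h2 : (m:ℝ) * δ ≤ ((m:ℝ) + 1) * δ := by nlinarith
        have h3 : ((m:ℝ) + 1) * δ ≤ T := by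
          have : ((N:ℝ) + 1) * δ = T := by rw [hδ]; field_simp
          nlinarith
        have hb := h ((m:ℝ) * δ) (((m:ℝ) + 1) * δ) h1 h2 h3
        have heq : (((m:ℝ) + 1) * δ - (m:ℝ) * δ) ^ 2 = δ ^ 2 := by ring
        have ihm := ih hm
        push_cast
        rw [heq] at hb
        nlinarith
    have hfin := hstep (N + 1) le_rfl
    have hTδ : ((N:ℝ) + 1) * δ = T := by rw [hδ]; field_simp
    have hδ2 : ((N:ℝ) + 1) * (C * δ ^ 2) = C * T ^ 2 / ((N:ℝ) + 1) := by
      rw [hδ]; field_simp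
    push_cast at hfin
    rw [hTδ, hδ2] at hfin
    exact hfin
  by_contra hlt
  push_neg at hlt
  set ε := g T - g 0 with hε
  have hε0 : 0 < ε := by simp [hε]; linarith
  obtain ⟨N, hN⟩ := exists_nat_gt (C * T ^ 2 / ε)
  have hN1 : (0:ℝ) < (N:ℝ) + 1 := by positivity
  have h1 : C * T ^ 2 / ε < (N:ℝ) + 1 := by linarith
  have h2 : C * T ^ 2 < ε * ((N:ℝ) + 1) := by
    have := (div_lt_iff₀ hε0).1 h1
    linarith
  have h3 : C * T ^ 2 / ((N:ℝ) + 1) < ε := by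
    rw [div_lt_iff₀ hN1]
    linarith
  have := key N
  simp only [hε] at h3
  linarith

set_option maxHeartbeats 1000000 in
/-- No-deactivation theorem: if the loss vanishes at `wGM` (all data fitted) and
`y j / ‖x j‖ > ‖w₀ − wGM‖` with `x j` activated at `w₀`, then `x j` stays
activated along the whole gradient flow. -/
theorem stmt4 {n d : ℕ} (x : Fin n → EuclideanSpace ℝ (Fin d)) (y : Fin n → ℝ)
    (hy : ∀ i, 0 < y i)
    (F : EuclideanSpace ℝ (Fin d) → EuclideanSpace ℝ (Fin d))
    (hF : ∀ w, F w = ∑ i ∈ Finset.univ.filter (fun i => 0 < (inner ℝ w (x i) : ℝ)),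
        ((inner ℝ w (x i) : ℝ) - y i) • x i)
    (wGM : EuclideanSpace ℝ (Fin d)) (hGM : ∀ i, (inner ℝ wGM (x i) : ℝ) = y i)
    (w : ℝ → EuclideanSpace ℝ (Fin d))
    (hcont : ContinuousOn w (Set.Ici 0))
    (hflow : ∀ t ≥ (0:ℝ), w t = w 0 - ∫ s in (0:ℝ)..t, F (w s))
    (j : Fin n) (hxj : x j ≠ 0) (hact : 0 < (inner ℝ (w 0) (x j) : ℝ))
    (hnorm : ‖w 0 - wGM‖ < y j / ‖x j‖) :
    ∀ t ≥ (0:ℝ), 0 < (inner ℝ (w t) (x j) : ℝ) := by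
  intro t ht
  -- continuous extension of w to all of ℝ
  set W : ℝ → EuclideanSpace ℝ (Fin d) := fun s => w (max s 0) with hWdef
  have hWcont : Continuous W :=
    hcont.comp_continuous (continuous_id.max continuous_const)
      (fun s => mem_Ici.2 (le_max_right _ _))
  have hWeq : ∀ s : ℝ, 0 ≤ s → W s = w s := by
    intro s hs; simp [hWdef, max_eq_left hs]
  -- key sign fact: ⟨F v, v - wGM⟩ ≥ 0
  have hkey : ∀ v : EuclideanSpace ℝ (Fin d), 0 ≤ (inner ℝ (F v) (v - wGM) : ℝ) := by
    intro v
    rw [hF, sum_inner]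
    refine Finset.sum_nonneg fun i _ => ?_
    rw [real_inner_smul_left, inner_sub_right]
    have h1 : (inner ℝ (x i) v : ℝ) = inner ℝ v (x i) := real_inner_comm _ _
    have h2 : (inner ℝ (x i) wGM : ℝ) = y i := by rw [real_inner_comm]; exact hGM i
    rw [h1, h2]
    exact mul_self_nonneg _
  -- measurability of F ∘ W
  have hFWsm : StronglyMeasurable (fun s => F (W s)) := by
    have heq : (fun s => F (W s)) = fun s => ∑ i : Fin n,
        Set.indicator {s : ℝ | 0 < (inner ℝ (W s) (x i) : ℝ)}
          (fun s => ((inner ℝ (W s) (x i) : ℝ) - y i) • x i) s := by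
      funext s
      rw [hF, Finset.sum_filter]
      refine Finset.sum_congr rfl fun i _ => ?_
      by_cases h : 0 < (inner ℝ (W s) (x i) : ℝ) <;> simp [Set.indicator_apply, h]
    rw [heq]
    refine Finset.stronglyMeasurable_fun_sum _ fun i _ => ?_
    have hcont_i : Continuous fun s => (inner ℝ (W s) (x i) : ℝ) :=
      (hWcont.inner continuous_const)
    refine StronglyMeasurable.indicator ?_ ?_
    · exact ((hcont_i.sub continuous_const).smul continuous_const).stronglyMeasurable
    · exact (isOpen_lt continuous_const hcont_i).measurableSet
  -- bound on F ∘ W over [0, t]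
  obtain ⟨R, hR⟩ := isCompact_Icc.exists_bound_of_continuousOn
    (hWcont.continuousOn (s := Icc (0:ℝ) t))
  have hR0 : 0 ≤ R := le_trans (norm_nonneg _) (hR 0 ⟨le_refl _, ht⟩)
  set M : ℝ := ∑ i : Fin n, (R * ‖x i‖ + y i) * ‖x i‖ with hMdef
  have hM0 : 0 ≤ M := Finset.sum_nonneg fun i _ => by
    have := hy i; have := norm_nonneg (x i); positivity
  have hFb : ∀ s ∈ Icc (0:ℝ) t, ‖F (W s)‖ ≤ M := by
    intro s hs
    rw [hF]
    calc ‖∑ i ∈ Finset.univ.filter (fun i => 0 < (inner ℝ (W s) (x i) : ℝ)),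
          ((inner ℝ (W s) (x i) : ℝ) - y i) • x i‖
        ≤ ∑ i ∈ Finset.univ.filter (fun i => 0 < (inner ℝ (W s) (x i) : ℝ)),
          ‖((inner ℝ (W s) (x i) : ℝ) - y i) • x i‖ := norm_sum_le _ _
      _ ≤ ∑ i : Fin n, ‖((inner ℝ (W s) (x i) : ℝ) - y i) • x i‖ :=
          Finset.sum_le_sum_of_subset_of_nonneg (Finset.filter_subset _ _)
            (fun i _ _ => norm_nonneg _)
      _ ≤ M := by
          refine Finset.sum_le_sum fun i _ => ?_
          rw [norm_smul, Real.norm_eq_abs]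
          have h1 : |(inner ℝ (W s) (x i) : ℝ)| ≤ ‖W s‖ * ‖x i‖ :=
            abs_real_inner_le_norm _ _
          have h2 : ‖W s‖ ≤ R := hR s hs
          have h3 : |(inner ℝ (W s) (x i) : ℝ) - y i| ≤ R * ‖x i‖ + y i := by
            have := abs_sub_abs_le_abs_sub ((inner ℝ (W s) (x i) : ℝ)) (y i)
            have hyi := (hy i).le
            have := norm_nonneg (x i)
            calc |(inner ℝ (W s) (x i) : ℝ) - y i|
                ≤ |(inner ℝ (W s) (x i) : ℝ)| + |y i| := abs_sub _ _
              _ ≤ R * ‖x i‖ + y i := by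
                  rw [abs_of_nonneg hyi]
                  nlinarith
          exact mul_le_mul_of_nonneg_right h3 (norm_nonneg _)
  -- interval integrability on subintervals of [0, t]
  have hintg : ∀ a b : ℝ, 0 ≤ a → a ≤ b → b ≤ t →
      IntervalIntegrable (fun s => F (W s)) volume a b := by
    intro a b ha hab hbt
    rw [intervalIntegrable_iff]
    refine Integrable.mono' (g := fun _ => M) ?_ hFWsm.aestronglyMeasurable ?_
    · exact (integrableOn_const measure_Ioc_lt_top.ne)
    · refine ae_restrict_of_forall_mem measurableSet_uIoc fun s hs => ?_
      rw [uIoc_of_le hab] at hs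
      exact hFb s ⟨ha.trans hs.1.le, hs.2.trans hbt⟩
  -- the flow equation for W on subintervals
  have hWflow : ∀ a b : ℝ, 0 ≤ a → a ≤ b → b ≤ t →
      W b - W a = -∫ s in a..b, F (W s) := by
    intro a b ha hab hbt
    have hb0 : 0 ≤ b := ha.trans hab
    have hcongr : ∀ c : ℝ, 0 ≤ c →
        (∫ s in (0:ℝ)..c, F (w s)) = ∫ s in (0:ℝ)..c, F (W s) := by
      intro c hc
      refine intervalIntegral.integral_congr fun s hs => ?_
      rw [uIcc_of_le hc] at hs
      rw [hWeq s hs.1]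
    have e1 : w b = w 0 - ∫ s in (0:ℝ)..b, F (W s) := by
      rw [hflow b hb0, hcongr b hb0]
    have e2 : w a = w 0 - ∫ s in (0:ℝ)..a, F (W s) := by
      rw [hflow a ha, hcongr a ha]
    have hsub := intervalIntegral.integral_interval_sub_left
      (hintg 0 b le_rfl hb0 hbt) (hintg 0 a le_rfl ha (hab.trans hbt))
    rw [hWeq b hb0, hWeq a ha, e1, e2]
    rw [← hsub]; abel
  -- Lipschitz-type bound on W
  have hstepnorm : ∀ a b : ℝ, 0 ≤ a → a ≤ b → b ≤ t →
      ‖W b - W a‖ ≤ M * (b - a) := by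
    intro a b ha hab hbt
    rw [hWflow a b ha hab hbt, norm_neg]
    have := intervalIntegral.norm_integral_le_of_norm_le_const
      (C := M) (f := fun s => F (W s)) (a := a) (b := b) ?_
    · rwa [abs_of_nonneg (sub_nonneg.2 hab)] at this
    · intro s hs
      rw [uIoc_of_le hab] at hs
      exact hFb s ⟨ha.trans hs.1.le, hs.2.trans hbt⟩
  -- quadratic increment bound on g s = ‖W s - wGM‖²
  have hquad : ∀ a b : ℝ, 0 ≤ a → a ≤ b → b ≤ t →
      ‖W b - wGM‖ ^ 2 ≤ ‖W a - wGM‖ ^ 2 + (2 * M ^ 2) * (b - a) ^ 2 := by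
    intro a b ha hab hbt
    set u : EuclideanSpace ℝ (Fin d) := W a - wGM with hu
    have hWb : W b - wGM = u + (W b - W a) := by rw [hu]; abel
    rw [hWb, norm_add_sq_real]
    -- the inner-product integral
    have hIeq : (inner ℝ u (W b - W a) : ℝ) = -∫ s in a..b, (inner ℝ u (F (W s)) : ℝ) := by
      rw [hWflow a b ha hab hbt, inner_neg_right]
      congr 1
      have := ContinuousLinearMap.intervalIntegral_comp_comm (μ := volume)
        (innerSL ℝ u) (hintg a b ha hab hbt)
      simpa using this.symm
    -- pointwise lower bound on the integrand
    have hpt : ∀ s ∈ Icc a b, -(M ^ 2) * (s - a) ≤ (inner ℝ u (F (W s)) : ℝ) := by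
      intro s hs
      have hs0 : 0 ≤ s := ha.trans hs.1
      have hst : s ≤ t := hs.2.trans hbt
      have hsplit : u = (W s - wGM) + (W a - W s) := by rw [hu]; abel
      rw [hsplit, inner_add_left]
      have h1 : 0 ≤ (inner ℝ (W s - wGM) (F (W s)) : ℝ) := by
        rw [real_inner_comm]; exact hkey (W s)
      have h2 : -(M * (s - a)) * M ≤ (inner ℝ (W a - W s) (F (W s)) : ℝ) := by
        have habs : |(inner ℝ (W a - W s) (F (W s)) : ℝ)| ≤ ‖W a - W s‖ * ‖F (W s)‖ :=
          abs_real_inner_le_norm _ _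
        have hn1 : ‖W a - W s‖ ≤ M * (s - a) := by
          rw [norm_sub_rev]; exact hstepnorm a s ha hs.1 hst
        have hn2 : ‖F (W s)‖ ≤ M := hFb s ⟨hs0, hst⟩
        have := neg_abs_le ((inner ℝ (W a - W s) (F (W s)) : ℝ))
        have hmul : ‖W a - W s‖ * ‖F (W s)‖ ≤ (M * (s - a)) * M := by
          have := norm_nonneg (W a - W s); have := norm_nonneg (F (W s))
          nlinarith
        nlinarith
      nlinarith
    -- integrability of both sides
    have hint1 : IntervalIntegrable (fun s => -(M ^ 2) * (s - a)) volume a b :=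
      (Continuous.intervalIntegrable (continuous_const.mul (continuous_id.sub continuous_const)) a b)
    have hint2 : IntervalIntegrable (fun s => (inner ℝ u (F (W s)) : ℝ)) volume a b := by
      rw [intervalIntegrable_iff] at *
      exact (innerSL ℝ u).integrable_comp (hintg a b ha hab hbt |> fun h => by
        rw [intervalIntegrable_iff] at h; exact h)
    have hmono := intervalIntegral.integral_mono_on hab hint1 hint2 hpt
    -- compute the comparison integral
    have hcomp : (∫ s in a..b, -(M ^ 2) * (s - a)) = -(M ^ 2) * ((b - a) ^ 2 / 2) := by
      rw [intervalIntegral.integral_const_mul]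
      congr 1
      have : (∫ s in a..b, (s - a)) = ∫ s in (a - a)..(b - a), s :=
        intervalIntegral.integral_comp_sub_right (fun s => s) a
      rw [this, sub_self, integral_id]
      ring
    rw [hcomp] at hmono
    have hIlb : -((M ^ 2) * ((b - a) ^ 2) / 2) ≤ ∫ s in a..b, (inner ℝ u (F (W s)) : ℝ) := by
      nlinarith [hmono]
    have hnrm : ‖W b - W a‖ ≤ M * (b - a) := hstepnorm a b ha hab hbt
    have hnn : (0:ℝ) ≤ ‖W b - W a‖ := norm_nonneg _
    have hIub : (inner ℝ u (W b - W a) : ℝ) ≤ (M ^ 2) * ((b - a) ^ 2) / 2 := by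
      rw [hIeq]; linarith
    nlinarith
  -- conclude monotonicity of the distance
  have hmain : ‖W t - wGM‖ ^ 2 ≤ ‖W 0 - wGM‖ ^ 2 := by
    refine quad_telescope (g := fun s => ‖W s - wGM‖ ^ 2) (C := 2 * M ^ 2) (T := t) (by positivity) ht ?_
    intro a b ha hab hbt
    exact hquad a b ha hab hbt
  rw [hWeq t ht, hWeq 0 le_rfl] at hmain
  have hle : ‖w t - wGM‖ ≤ ‖w 0 - wGM‖ :=
    (pow_le_pow_iff_left₀ (norm_nonneg _) (norm_nonneg _) two_ne_zero).1 hmain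
  have hxj0 : (0:ℝ) < ‖x j‖ := norm_pos_iff.2 hxj
  have hlt : ‖w t - wGM‖ * ‖x j‖ < y j := by
    calc ‖w t - wGM‖ * ‖x j‖ ≤ ‖w 0 - wGM‖ * ‖x j‖ :=
          mul_le_mul_of_nonneg_right hle (norm_nonneg _)
      _ < (y j / ‖x j‖) * ‖x j‖ := by
          exact mul_lt_mul_of_pos_right hnorm hxj0
      _ = y j := div_mul_cancel₀ _ hxj0.ne'
  have hdecomp : (inner ℝ (w t) (x j) : ℝ) = y j + (inner ℝ (w t - wGM) (x j) : ℝ) := by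
    rw [inner_sub_left, hGM j]; ring
  have hb : -(‖w t - wGM‖ * ‖x j‖) ≤ (inner ℝ (w t - wGM) (x j) : ℝ) :=
    (neg_abs_le _).trans' (neg_le_neg (abs_real_inner_le_norm _ _))
  rw [hdecomp]
  linarith
end

section
/- Suppose y_i > 0 for all i, and suppose there exists w*_{GM} ∈ ℝ^d with ⟨w*_{GM}, x_i⟩ = y_i for all i. Let w : [0,∞) → ℝ^d be a gradient flow of the ReLU loss with initial point w_0 = w(0). Let w*_{loc} ∈ ℝ^d be a point with support vector set S = {i : ⟨w*_{loc}, x_i⟩ > 0}, and suppose ⟨w*_{loc}, x_i⟩ < 0 for all i ∉ S (as holds for any local minimizer, which lies off all activation boundaries). If there exists j ∉ S with x_j ≠ 0 and y_j / ‖x_j‖ ≥ ‖w_0 − w*_{GM}‖, then w(t) does not converge to w*_{loc} as t → ∞. -/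
open MeasureTheory intervalIntegral Set

section Aux

variable {n d : ℕ}

private lemma stmt5_F_meas (x : Fin n → EuclideanSpace ℝ (Fin d)) (y : Fin n → ℝ)
    (F : EuclideanSpace ℝ (Fin d) → EuclideanSpace ℝ (Fin d))
    (hF : ∀ w, F w = ∑ i ∈ Finset.univ.filter (fun i => 0 < (inner ℝ w (x i) : ℝ)),
        ((inner ℝ w (x i) : ℝ) - y i) • x i) : Measurable F := by
  have hFeq : F = fun u => ∑ i : Fin n,
      if 0 < (inner ℝ u (x i) : ℝ) then ((inner ℝ u (x i) : ℝ) - y i) • x i else 0 := by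
    funext u; rw [hF u, Finset.sum_filter]
  rw [hFeq]
  refine Finset.measurable_sum _ (fun i _ => ?_)
  have hc : Continuous fun u : EuclideanSpace ℝ (Fin d) => (inner ℝ u (x i) : ℝ) :=
    continuous_id.inner continuous_const
  have hmeasset : MeasurableSet {u : EuclideanSpace ℝ (Fin d) | 0 < (inner ℝ u (x i) : ℝ)} :=
    measurableSet_lt measurable_const hc.measurable
  exact Measurable.ite hmeasset
    (((hc.sub continuous_const).smul continuous_const).measurable) measurable_const

private lemma stmt5_F_bound (x : Fin n → EuclideanSpace ℝ (Fin d)) (y : Fin n → ℝ)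
    (F : EuclideanSpace ℝ (Fin d) → EuclideanSpace ℝ (Fin d))
    (hF : ∀ w, F w = ∑ i ∈ Finset.univ.filter (fun i => 0 < (inner ℝ w (x i) : ℝ)),
        ((inner ℝ w (x i) : ℝ) - y i) • x i) (u : EuclideanSpace ℝ (Fin d)) :
    ‖F u‖ ≤ ∑ i : Fin n, (‖u‖ * ‖x i‖ + |y i|) * ‖x i‖ := by
  rw [hF u]
  calc ‖∑ i ∈ Finset.univ.filter (fun i => 0 < (inner ℝ u (x i) : ℝ)),
        ((inner ℝ u (x i) : ℝ) - y i) • x i‖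
      ≤ ∑ i ∈ Finset.univ.filter (fun i => 0 < (inner ℝ u (x i) : ℝ)),
        ‖((inner ℝ u (x i) : ℝ) - y i) • x i‖ := norm_sum_le _ _
    _ ≤ ∑ i ∈ Finset.univ.filter (fun i => 0 < (inner ℝ u (x i) : ℝ)),
        (‖u‖ * ‖x i‖ + |y i|) * ‖x i‖ := by
        refine Finset.sum_le_sum fun i _ => ?_
        rw [norm_smul]
        have h1 : ‖(inner ℝ u (x i) : ℝ) - y i‖ ≤ ‖u‖ * ‖x i‖ + |y i| := by
          calc ‖(inner ℝ u (x i) : ℝ) - y i‖ ≤ |(inner ℝ u (x i) : ℝ)| + |y i| := abs_sub _ _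
            _ ≤ ‖u‖ * ‖x i‖ + |y i| := by
                have := abs_real_inner_le_norm u (x i); linarith
        exact mul_le_mul_of_nonneg_right h1 (norm_nonneg _)
    _ ≤ ∑ i : Fin n, (‖u‖ * ‖x i‖ + |y i|) * ‖x i‖ := by
        refine Finset.sum_le_sum_of_subset_of_nonneg (Finset.subset_univ _) fun i _ _ => ?_
        positivity

private lemma stmt5_inner_nonneg (x : Fin n → EuclideanSpace ℝ (Fin d)) (y : Fin n → ℝ)
    (F : EuclideanSpace ℝ (Fin d) → EuclideanSpace ℝ (Fin d))
    (hF : ∀ w, F w = ∑ i ∈ Finset.univ.filter (fun i => 0 < (inner ℝ w (x i) : ℝ)),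
        ((inner ℝ w (x i) : ℝ) - y i) • x i)
    (wGM : EuclideanSpace ℝ (Fin d)) (hGM : ∀ i, (inner ℝ wGM (x i) : ℝ) = y i)
    (u : EuclideanSpace ℝ (Fin d)) :
    0 ≤ (inner ℝ (F u) (u - wGM) : ℝ) := by
  rw [hF u, sum_inner]
  refine Finset.sum_nonneg fun i _ => ?_
  rw [real_inner_smul_left, inner_sub_right]
  have h1 : (inner ℝ (x i) u : ℝ) = inner ℝ u (x i) := real_inner_comm _ _
  have h2 : (inner ℝ (x i) wGM : ℝ) = y i := by rw [real_inner_comm]; exact hGM i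
  rw [h1, h2]
  exact mul_self_nonneg _

end Aux

section Main

variable {n d : ℕ}

private lemma stmt5_mono (x : Fin n → EuclideanSpace ℝ (Fin d)) (y : Fin n → ℝ)
    (F : EuclideanSpace ℝ (Fin d) → EuclideanSpace ℝ (Fin d))
    (hF : ∀ w, F w = ∑ i ∈ Finset.univ.filter (fun i => 0 < (inner ℝ w (x i) : ℝ)),
        ((inner ℝ w (x i) : ℝ) - y i) • x i)
    (wGM : EuclideanSpace ℝ (Fin d)) (hGM : ∀ i, (inner ℝ wGM (x i) : ℝ) = y i)
    (w : ℝ → EuclideanSpace ℝ (Fin d))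
    (hcont : ContinuousOn w (Set.Ici 0))
    (hflow : ∀ t ≥ (0:ℝ), w t = w 0 - ∫ s in (0:ℝ)..t, F (w s))
    (T : ℝ) (hT : 0 ≤ T) :
    ‖w T - wGM‖ ≤ ‖w 0 - wGM‖ := by
  have hFmeas := stmt5_F_meas x y F hF
  -- interval integrability
  have hint : ∀ a b : ℝ, 0 ≤ a → a ≤ b → IntervalIntegrable (fun s => F (w s)) volume a b := by
    intro a b ha hab
    rw [intervalIntegrable_iff_integrableOn_Icc_of_le hab]
    have hsub : Icc a b ⊆ Ici (0:ℝ) := fun s hs => le_trans ha hs.1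
    have hwc : ContinuousOn w (Icc a b) := hcont.mono hsub
    have hwm : AEMeasurable w (volume.restrict (Icc a b)) :=
      hwc.aemeasurable measurableSet_Icc
    have hmF : AEStronglyMeasurable (fun s => F (w s)) (volume.restrict (Icc a b)) :=
      (hFmeas.comp_aemeasurable hwm).aestronglyMeasurable
    obtain ⟨C, hC⟩ := isCompact_Icc.exists_bound_of_continuousOn hwc
    refine Integrable.mono' (g := fun _ => ∑ i : Fin n, (C * ‖x i‖ + |y i|) * ‖x i‖)
      (integrable_const _) hmF ?_
    refine (ae_restrict_iff' measurableSet_Icc).2 (ae_of_all _ fun s hs => ?_)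
    calc ‖F (w s)‖ ≤ ∑ i : Fin n, (‖w s‖ * ‖x i‖ + |y i|) * ‖x i‖ :=
        stmt5_F_bound x y F hF (w s)
      _ ≤ ∑ i : Fin n, (C * ‖x i‖ + |y i|) * ‖x i‖ := by
        refine Finset.sum_le_sum fun i _ => ?_
        have := hC s hs
        have h0 : (0:ℝ) ≤ ‖x i‖ := norm_nonneg _
        nlinarith [norm_nonneg (w s), mul_nonneg (mul_nonneg (sub_nonneg.2 this) h0) h0]
  -- flow increment
  have hseg : ∀ a b : ℝ, 0 ≤ a → a ≤ b → w b - w a = -∫ s in a..b, F (w s) := by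
    intro a b ha hab
    have h1 := hflow a ha
    have h2 := hflow b (le_trans ha hab)
    have hadd := intervalIntegral.integral_add_adjacent_intervals
      (hint 0 a le_rfl ha) (hint a b ha hab)
    rw [h2, h1, ← hadd]; abel
  -- reduce to squared norms plus epsilon
  refine le_of_pow_le_pow_left₀ two_ne_zero (norm_nonneg _) ?_
  refine le_of_forall_pos_le_add fun η hη => ?_
  -- global bound M on ‖F (w s)‖ over [0, T]
  have hsub : Icc (0:ℝ) T ⊆ Ici (0:ℝ) := fun s hs => hs.1
  have hwc : ContinuousOn w (Icc 0 T) := hcont.mono hsub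
  obtain ⟨C, hC⟩ := isCompact_Icc.exists_bound_of_continuousOn hwc
  have hC0 : 0 ≤ C := le_trans (norm_nonneg _) (hC 0 ⟨le_rfl, hT⟩)
  set M : ℝ := ∑ i : Fin n, (C * ‖x i‖ + |y i|) * ‖x i‖ with hMdef
  have hM0 : 0 ≤ M := Finset.sum_nonneg fun i _ => by positivity
  have hFb : ∀ s ∈ Icc (0:ℝ) T, ‖F (w s)‖ ≤ M := by
    intro s hs
    calc ‖F (w s)‖ ≤ ∑ i : Fin n, (‖w s‖ * ‖x i‖ + |y i|) * ‖x i‖ :=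
        stmt5_F_bound x y F hF (w s)
      _ ≤ M := by
        refine Finset.sum_le_sum fun i _ => ?_
        have := hC s hs
        have h0 : (0:ℝ) ≤ ‖x i‖ := norm_nonneg _
        nlinarith [norm_nonneg (w s), mul_nonneg (mul_nonneg (sub_nonneg.2 this) h0) h0]
  -- uniform continuity
  have huc := (isCompact_Icc (a := (0:ℝ)) (b := T)).uniformContinuousOn_of_continuous hwc
  rw [Metric.uniformContinuousOn_iff] at huc
  set ε : ℝ := η / (4 * (M + 1) * (T + 1)) with hεdef
  have hε : 0 < ε := by positivity
  obtain ⟨δ, hδ, hδuc⟩ := huc ε hε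
  obtain ⟨N, hN⟩ := exists_nat_gt (T / δ)
  set τ : ℝ := T / (N + 1 : ℝ) with hτdef
  have hNpos : (0:ℝ) < (N:ℝ) + 1 := by positivity
  have hτ0 : 0 ≤ τ := div_nonneg hT (le_of_lt hNpos)
  have hτδ : τ < δ := by
    rw [hτdef, div_lt_iff₀ hNpos]
    have : T / δ < (N:ℝ) + 1 := lt_trans hN (by linarith)
    calc T = (T / δ) * δ := by field_simp
      _ < ((N:ℝ) + 1) * δ := by exact mul_lt_mul_of_pos_right this hδ
      _ = δ * ((N:ℝ) + 1) := mul_comm _ _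
  -- partition points
  set t : ℕ → ℝ := fun k => (k : ℝ) * τ with htdef
  have ht_mem : ∀ k ≤ N + 1, t k ∈ Icc (0:ℝ) T := by
    intro k hk
    constructor
    · positivity
    · have : (k:ℝ) ≤ (N:ℝ) + 1 := by exact_mod_cast hk
      calc (k:ℝ) * τ ≤ ((N:ℝ) + 1) * τ := mul_le_mul_of_nonneg_right this hτ0
        _ = T := by rw [hτdef]; field_simp
  have htlast : t (N + 1) = T := by
    show ((N + 1 : ℕ) : ℝ) * τ = T
    push_cast
    rw [hτdef]; field_simp
  have ht0 : t 0 = 0 := by simp [htdef]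
  -- per-step bound
  have hstep : ∀ k < N + 1,
      ‖w (t (k+1)) - wGM‖^2 - ‖w (t k) - wGM‖^2 ≤ 2 * M * ε * τ := by
    intro k hk
    set a := t k with hadef
    set b := t (k+1) with hbdef
    have hamem : a ∈ Icc (0:ℝ) T := ht_mem k (le_of_lt hk)
    have hbmem : b ∈ Icc (0:ℝ) T := ht_mem (k+1) hk
    have ha0 : 0 ≤ a := hamem.1
    have hba : b - a = τ := by
      show ((k+1 : ℕ):ℝ) * τ - (k:ℝ) * τ = τ
      push_cast; ring
    have hab : a ≤ b := by linarith
    set p := w b - wGM with hpdef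
    set q := w a - wGM with hqdef
    have hkey : (inner ℝ (w b - w a) (p + q) : ℝ) = ‖p‖^2 - ‖q‖^2 := by
      have hwba : w b - w a = p - q := by rw [hpdef, hqdef]; abel
      rw [hwba, inner_sub_left, inner_add_right, inner_add_right,
        real_inner_self_eq_norm_sq, real_inner_self_eq_norm_sq, real_inner_comm q p]
      ring
    have hwdiff := hseg a b ha0 hab
    -- integrand bound
    have hptbound : ∀ s ∈ Icc a b, -(2 * M * ε) ≤ (inner ℝ (F (w s)) (p + q) : ℝ) := by
      intro s hs
      have hsmem : s ∈ Icc (0:ℝ) T := ⟨le_trans ha0 hs.1, le_trans hs.2 hbmem.2⟩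
      set v := w s - wGM with hvdef
      have hsplit : p + q = (2:ℝ) • v + ((p - v) + (q - v)) := by
        rw [two_smul]; abel
      have hpv : p - v = w b - w s := by rw [hpdef, hvdef]; abel
      have hqv : q - v = w a - w s := by rw [hqdef, hvdef]; abel
      have hd1 : ‖p - v‖ < ε := by
        have hdist : dist b s < δ := by
          rw [Real.dist_eq, abs_of_nonneg (by linarith [hs.2] : (0:ℝ) ≤ b - s)]
          linarith [hs.1, hs.2]
        have := hδuc b hbmem s hsmem hdist
        rwa [dist_eq_norm, ← hpv] at this
      have hd2 : ‖q - v‖ < ε := by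
        have hdist : dist a s < δ := by
          rw [Real.dist_eq, abs_of_nonpos (by linarith [hs.1] : a - s ≤ 0)]
          linarith [hs.1, hs.2]
        have := hδuc a hamem s hsmem hdist
        rwa [dist_eq_norm, ← hqv] at this
      have hsum2 : ‖(p - v) + (q - v)‖ ≤ 2 * ε := by
        calc ‖(p - v) + (q - v)‖ ≤ ‖p - v‖ + ‖q - v‖ := norm_add_le _ _
          _ ≤ 2 * ε := by linarith
      have hFs : ‖F (w s)‖ ≤ M := hFb s hsmem
      have hip : -(‖F (w s)‖ * ‖(p - v) + (q - v)‖) ≤ (inner ℝ (F (w s)) ((p - v) + (q - v)) : ℝ) :=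
        (abs_le.1 (abs_real_inner_le_norm _ _)).1
      have hgrad : 0 ≤ (inner ℝ (F (w s)) v : ℝ) := stmt5_inner_nonneg x y F hF wGM hGM (w s)
      have hexp : (inner ℝ (F (w s)) (p + q) : ℝ)
          = 2 * (inner ℝ (F (w s)) v : ℝ) + (inner ℝ (F (w s)) ((p - v) + (q - v)) : ℝ) := by
        rw [hsplit, inner_add_right, real_inner_smul_right]
      have hprod : ‖F (w s)‖ * ‖(p - v) + (q - v)‖ ≤ M * (2 * ε) :=
        mul_le_mul hFs hsum2 (norm_nonneg _) hM0
      rw [hexp]; linarith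
    have hintab := hint a b ha0 hab
    have hii : IntervalIntegrable (fun s => (inner ℝ (F (w s)) (p + q) : ℝ)) volume a b := by
      have h1 : (fun s => (inner ℝ (F (w s)) (p + q) : ℝ))
          = fun s => (innerSL ℝ (p + q)) (F (w s)) := by
        funext s; simp only [innerSL_apply_apply]; exact real_inner_comm _ _
      rw [h1]
      exact ⟨(innerSL ℝ (p + q)).integrable_comp hintab.1,
        (innerSL ℝ (p + q)).integrable_comp hintab.2⟩
    have hlin : (inner ℝ (∫ s in a..b, F (w s)) (p + q) : ℝ)
        = ∫ s in a..b, (inner ℝ (F (w s)) (p + q) : ℝ) := by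
      rw [real_inner_comm]
      have h2 : (inner ℝ (p + q) (∫ s in a..b, F (w s)) : ℝ)
          = (innerSL ℝ (p + q)) (∫ s in a..b, F (w s)) := by simp only [innerSL_apply_apply]
      rw [h2, ← (innerSL ℝ (p + q)).intervalIntegral_comp_comm hintab]
      refine intervalIntegral.integral_congr fun s _ => ?_
      simp only [innerSL_apply_apply]
      exact real_inner_comm _ _
    have hmonoInt : (∫ _s in a..b, (-(2 * M * ε)) : ℝ)
        ≤ ∫ s in a..b, (inner ℝ (F (w s)) (p + q) : ℝ) :=
      intervalIntegral.integral_mono_on hab intervalIntegrable_const hii hptbound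
    have hconst : (∫ _s in a..b, (-(2 * M * ε)) : ℝ) = τ * (-(2 * M * ε)) := by
      rw [intervalIntegral.integral_const, smul_eq_mul, hba]
    have hdiff : ‖p‖^2 - ‖q‖^2 = -(∫ s in a..b, (inner ℝ (F (w s)) (p + q) : ℝ)) := by
      rw [← hkey, hwdiff, inner_neg_left, hlin]
    rw [hconst] at hmonoInt
    have hgoal : ‖p‖^2 - ‖q‖^2 ≤ 2 * M * ε * τ := by
      rw [hdiff]; linarith
    exact hgoal
  have htel : ‖w T - wGM‖^2 - ‖w 0 - wGM‖^2 ≤ 2 * M * ε * T := by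
    have hsum := Finset.sum_range_sub (fun k => ‖w (t k) - wGM‖^2) (N + 1)
    calc ‖w T - wGM‖^2 - ‖w 0 - wGM‖^2
        = ∑ k ∈ Finset.range (N + 1), (‖w (t (k+1)) - wGM‖^2 - ‖w (t k) - wGM‖^2) := by
          rw [hsum, htlast, ht0]
      _ ≤ ∑ _k ∈ Finset.range (N + 1), (2 * M * ε * τ) :=
          Finset.sum_le_sum fun k hk => hstep k (Finset.mem_range.1 hk)
      _ = ((N:ℝ) + 1) * (2 * M * ε * τ) := by
          rw [Finset.sum_const, Finset.card_range]; push_cast; ring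
      _ = 2 * M * ε * T := by
          rw [hτdef]; field_simp
  have hfinal : 2 * M * ε * T ≤ η := by
    have h1 : (0:ℝ) < 4 * (M + 1) * (T + 1) := by positivity
    have h2 : 2 * M * ε * T = (2 * M * T) * η / (4 * (M + 1) * (T + 1)) := by
      rw [hεdef]; ring
    rw [h2, div_le_iff₀ h1]
    nlinarith [hM0, hT, hη.le]
  linarith [htel, hfinal]

end Main

/-- Gradient flow does not converge to a bad local minimum: if some data point
`x j` outside the support set `S` of `wloc` satisfies `y j / ‖x j‖ ≥ ‖w₀ − wGM‖`,
then the gradient flow started at `w₀` does not converge to `wloc`. -/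
theorem stmt5 {n d : ℕ} (x : Fin n → EuclideanSpace ℝ (Fin d)) (y : Fin n → ℝ)
    (hy : ∀ i, 0 < y i)
    (F : EuclideanSpace ℝ (Fin d) → EuclideanSpace ℝ (Fin d))
    (hF : ∀ w, F w = ∑ i ∈ Finset.univ.filter (fun i => 0 < (inner ℝ w (x i) : ℝ)),
        ((inner ℝ w (x i) : ℝ) - y i) • x i)
    (wGM : EuclideanSpace ℝ (Fin d)) (hGM : ∀ i, (inner ℝ wGM (x i) : ℝ) = y i)
    (w : ℝ → EuclideanSpace ℝ (Fin d))
    (hcont : ContinuousOn w (Set.Ici 0))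
    (hflow : ∀ t ≥ (0:ℝ), w t = w 0 - ∫ s in (0:ℝ)..t, F (w s))
    (wloc : EuclideanSpace ℝ (Fin d))
    (S : Set (Fin n)) (hS : S = {i | 0 < (inner ℝ wloc (x i) : ℝ)})
    (hoff : ∀ i ∉ S, (inner ℝ wloc (x i) : ℝ) < 0)
    (j : Fin n) (hjS : j ∉ S) (hxj : x j ≠ 0)
    (hnorm : ‖w 0 - wGM‖ ≤ y j / ‖x j‖) :
    ¬ Filter.Tendsto w Filter.atTop (nhds wloc) := by
  intro htend
  have hmono := stmt5_mono x y F hF wGM hGM w hcont hflow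
  -- limit of norms
  have hnt : Filter.Tendsto (fun t => ‖w t - wGM‖) Filter.atTop (nhds ‖wloc - wGM‖) :=
    ((htend.sub_const wGM).norm)
  have hloc : ‖wloc - wGM‖ ≤ ‖w 0 - wGM‖ := by
    refine le_of_tendsto hnt ?_
    filter_upwards [Filter.eventually_ge_atTop (0:ℝ)] with t ht
    exact hmono t ht
  have hxjn : 0 < ‖x j‖ := norm_pos_iff.2 hxj
  have hj1 : (inner ℝ (wloc - wGM) (x j) : ℝ) = inner ℝ wloc (x j) - y j := by
    rw [inner_sub_left, hGM j]
  have hj2 : |(inner ℝ (wloc - wGM) (x j) : ℝ)| ≤ ‖wloc - wGM‖ * ‖x j‖ :=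
    abs_real_inner_le_norm _ _
  have hneg : (inner ℝ wloc (x j) : ℝ) < 0 := hoff j hjS
  have hj3 : |(inner ℝ wloc (x j) : ℝ) - y j| = y j - inner ℝ wloc (x j) := by
    rw [abs_of_neg (by linarith [hy j])]; ring
  have hbound : ‖wloc - wGM‖ * ‖x j‖ ≤ y j := by
    have h := mul_le_mul_of_nonneg_right (le_trans hloc hnorm) (le_of_lt hxjn)
    rwa [div_mul_cancel₀ _ (ne_of_gt hxjn)] at h
  rw [hj1, hj3] at hj2
  linarith
end

section
/- Let x_1, …, x_n ∈ ℝ² satisfy x_i ≥ 0 componentwise and x_i ≠ 0 for every i. Let w_1, w_2 ∈ ℝ² both lie in the open second quadrant (first coordinate negative, second coordinate positive). Then the activation sets are nested: either {i : ⟨w_1, x_i⟩ > 0} ⊆ {i : ⟨w_2, x_i⟩ > 0} or {i : ⟨w_2, x_i⟩ > 0} ⊆ {i : ⟨w_1, x_i⟩ > 0}. -/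
open Matrix

/-- Ordering of partitions in ℝ²: for nonnegative nonzero data and two
parameters in the open second quadrant, the activation sets are nested. -/
theorem stmt8 {n : ℕ} (x : Fin n → (Fin 2 → ℝ))
    (hxnn : ∀ i k, 0 ≤ x i k) (hxne : ∀ i, x i ≠ 0)
    (w1 w2 : Fin 2 → ℝ)
    (h1 : w1 0 < 0 ∧ 0 < w1 1) (h2 : w2 0 < 0 ∧ 0 < w2 1) :
    {i | 0 < w1 ⬝ᵥ x i} ⊆ {i | 0 < w2 ⬝ᵥ x i} ∨
    {i | 0 < w2 ⬝ᵥ x i} ⊆ {i | 0 < w1 ⬝ᵥ x i} := by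
  obtain ⟨h10, h11⟩ := h1
  obtain ⟨h20, h21⟩ := h2
  rcases le_total ((-w2 0) * w1 1) ((-w1 0) * w2 1) with h | h
  · left
    intro i hi
    simp only [Set.mem_setOf_eq, dotProduct, Fin.sum_univ_two] at hi ⊢
    have h0 := hxnn i 0
    have h1' := hxnn i 1
    nlinarith [mul_pos h21 h11]
  · right
    intro i hi
    simp only [Set.mem_setOf_eq, dotProduct, Fin.sum_univ_two] at hi ⊢
    have h0 := hxnn i 0
    have h1' := hxnn i 1
    nlinarith [mul_pos h21 h11]
end

section
/- Let x_1, …, x_n ∈ ℝ^d with n ≥ 1, d ≥ 1, and x_i ≠ 0 for every i. Then the number of realizable strict activation patterns, i.e., the cardinality of the set {σ : {1,…,n} → {true, false} | ∃ w ∈ ℝ^d such that for every i, ⟨w, x_i⟩ ≠ 0 and (σ(i) = true ⇔ ⟨w, x_i⟩ > 0)}, is at most 2 ∑_{k=0}^{d−1} C(n−1, k), where C denotes the binomial coefficient. -/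
open Matrix

private lemma pascal_sum (m e : ℕ) : ∑ k ∈ Finset.range (e+1), (m+1).choose k
    = ∑ k ∈ Finset.range (e+1), m.choose k + ∑ k ∈ Finset.range e, m.choose k := by
  rw [Finset.sum_range_succ' (fun k => (m+1).choose k),
      Finset.sum_range_succ' (fun k => m.choose k)]
  simp [Nat.choose_succ_succ, Finset.sum_add_distrib]
  ring

private lemma two_le_bound (m d : ℕ) (hd : 1 ≤ d) :
    2 ≤ 2 * ∑ k ∈ Finset.range d, m.choose k := by
  have h0 : (0:ℕ) ∈ Finset.range d := by simp; omega
  have := Finset.single_le_sum (f := fun k => m.choose k) (fun i _ => Nat.zero_le _) h0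
  simp at this
  omega

private lemma rank_one_case {V : Type} [AddCommGroup V] [Module ℝ V] [FiniteDimensional ℝ V]
    (hV : Module.finrank ℝ V ≤ 1) {n : ℕ} (f : Fin (n+1) → (V →ₗ[ℝ] ℝ)) :
    {σ : Fin (n+1) → Bool | ∃ w : V,
      ∀ i, f i w ≠ 0 ∧ (σ i = true ↔ 0 < f i w)}.ncard ≤ 2 := by
  obtain ⟨v₀, hv₀⟩ := finrank_le_one_iff.mp hV
  have h2 : (Set.univ : Set Bool).ncard = 2 := by
    rw [Set.ncard_univ]; simp [Nat.card_eq_fintype_card]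
  rw [← h2]
  apply Set.ncard_le_ncard_of_injOn (fun σ => σ 0) (fun a _ => Set.mem_univ _) _
    Set.finite_univ
  rintro σ ⟨w, hw⟩ τ ⟨w', hw'⟩ h0
  obtain ⟨a, rfl⟩ := hv₀ w
  obtain ⟨b, rfl⟩ := hv₀ w'
  simp only [_root_.map_smul, smul_eq_mul] at hw hw'
  set c := f 0 v₀ with hc
  have hac : a * c ≠ 0 := (hw 0).1
  have hbc : b * c ≠ 0 := (hw' 0).1
  simp only at h0
  have hiff : (0 < a * c ↔ 0 < b * c) := by
    rw [← (hw 0).2, ← (hw' 0).2, h0]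
  have hprod : 0 < (a * c) * (b * c) := by
    rcases lt_or_gt_of_ne hac with h | h
    · have : b * c < 0 := lt_of_le_of_ne (not_lt.mp (fun hb => absurd (hiff.mpr hb) (not_lt.mpr h.le))) hbc
      exact mul_pos_of_neg_of_neg h this
    · exact mul_pos h (hiff.mp h)
  have hab : 0 < a * b := by nlinarith [sq_nonneg c, sq_nonneg (a*c - b*c)]
  funext i
  have h1 := (hw i).2
  have h2 := (hw' i).2
  have ha : a ≠ 0 := fun h => by simp [h] at hac
  have key : (0 < a * f i v₀) ↔ (0 < b * f i v₀) := by
    constructor <;> intro h <;> nlinarith [sq_nonneg a, sq_nonneg b, mul_pos hab h]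
  rw [← Bool.coe_iff_coe, h1, h2, key]

private lemma aux (n : ℕ) : ∀ (d : ℕ), 1 ≤ d →
    ∀ (V : Type) [AddCommGroup V] [Module ℝ V] [FiniteDimensional ℝ V],
    Module.finrank ℝ V ≤ d → ∀ (f : Fin n → (V →ₗ[ℝ] ℝ)),
    {σ : Fin n → Bool | ∃ w : V, ∀ i, f i w ≠ 0 ∧ (σ i = true ↔ 0 < f i w)}.ncard
      ≤ 2 * ∑ k ∈ Finset.range d, (n-1).choose k := by
  induction n with
  | zero =>
    intro d hd V _ _ _ hV f
    refine le_trans (le_trans (Set.ncard_le_ncard (Set.subset_univ _) Set.finite_univ) ?_)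
      (two_le_bound _ d hd)
    rw [Set.ncard_univ]
    simp [Nat.card_eq_fintype_card]
  | succ n ih =>
    intro d hd V _ _ _ hV f
    obtain ⟨e, rfl⟩ : ∃ e, d = e + 1 := ⟨d-1, (Nat.succ_pred_eq_of_pos hd).symm⟩
    by_cases he : e = 0
    · subst he
      have := rank_one_case (by simpa using hV) f
      simpa using this
    rcases Nat.eq_zero_or_pos n with hn | hn
    · subst hn
      refine le_trans (le_trans (Set.ncard_le_ncard (Set.subset_univ _) Set.finite_univ) ?_)
        (two_le_bound _ (e+1) (by omega))
      rw [Set.ncard_univ]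
      simp [Nat.card_eq_fintype_card]
    classical
    set L := Fin.last n with hL
    by_cases hfL : f L = 0
    · have hempty : {σ : Fin (n+1) → Bool | ∃ w : V, ∀ i, f i w ≠ 0 ∧ (σ i = true ↔ 0 < f i w)} = ∅ := by
        rw [Set.eq_empty_iff_forall_notMem]
        rintro σ ⟨w, hw⟩
        exact (hw L).1 (by rw [hfL]; rfl)
      rw [hempty]
      simp
    -- f L ≠ 0 : main case
    have hsurj : Function.Surjective (f L) := by
      obtain ⟨v, hv⟩ : ∃ v, f L v ≠ 0 := by
        by_contra h; push_neg at h; exact hfL (LinearMap.ext h)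
      intro c
      exact ⟨(c / f L v) • v, by simp [_root_.map_smul, smul_eq_mul, div_mul_cancel₀ _ hv]⟩
    have hHrank : Module.finrank ℝ (LinearMap.ker (f L)) ≤ e := by
      have hrk := LinearMap.finrank_range_add_finrank_ker (f L)
      rw [LinearMap.range_eq_top.mpr hsurj] at hrk
      rw [finrank_top] at hrk
      have : Module.finrank ℝ ℝ = 1 := Module.finrank_self ℝ
      omega
    set S : Set (Fin (n+1) → Bool) :=
      {σ | ∃ w : V, ∀ i, f i w ≠ 0 ∧ (σ i = true ↔ 0 < f i w)} with hS
    set T : Set (Fin n → Bool) :=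
      {τ | ∃ w : V, ∀ i : Fin n, f i.castSucc w ≠ 0 ∧ (τ i = true ↔ 0 < f i.castSucc w)} with hT
    set U : Set (Fin n → Bool) :=
      {τ | ∃ w : LinearMap.ker (f L), ∀ i : Fin n,
        f i.castSucc (w : V) ≠ 0 ∧ (τ i = true ↔ 0 < f i.castSucc (w : V))} with hU
    have hTbound : T.ncard ≤ 2 * ∑ k ∈ Finset.range (e+1), (n-1).choose k :=
      ih (e+1) (by omega) V hV (fun i => f i.castSucc)
    have hUbound : U.ncard ≤ 2 * ∑ k ∈ Finset.range e, (n-1).choose k :=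
      ih e (by omega) (LinearMap.ker (f L)) hHrank
        (fun i => (f i.castSucc).comp (LinearMap.ker (f L)).subtype)
    -- the injection
    have ext_eq : ∀ σ τ : Fin (n+1) → Bool,
        σ ∘ Fin.castSucc = τ ∘ Fin.castSucc → σ L = τ L → σ = τ := by
      intro σ τ h1 h2
      funext j
      induction j using Fin.lastCases with
      | last => exact h2
      | cast i => exact congrFun h1 i
    set Φ : (Fin (n+1) → Bool) → ((Fin n → Bool) ⊕ (Fin n → Bool)) := fun σ =>
      if σ L = true then Sum.inl (σ ∘ Fin.castSucc)
      else if Function.update σ L true ∈ S then Sum.inr (σ ∘ Fin.castSucc)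
      else Sum.inl (σ ∘ Fin.castSucc) with hΦ
    have hmem : ∀ σ ∈ S, Φ σ ∈ (Sum.inl '' T ∪ Sum.inr '' U : Set _) := by
      rintro σ hσ
      obtain ⟨w, hw⟩ := hσ
      have hTmem : σ ∘ Fin.castSucc ∈ T := ⟨w, fun i => hw i.castSucc⟩
      by_cases h1 : σ L = true
      · left; exact ⟨_, hTmem, by simp [hΦ, h1]⟩
      by_cases h2 : Function.update σ L true ∈ S
      · right
        refine ⟨σ ∘ Fin.castSucc, ?_, by simp [hΦ, h1, h2]⟩
        -- convexity argument
        obtain ⟨wp, hwp⟩ := h2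
        have hbneg : f L w < 0 := by
          refine lt_of_le_of_ne (not_lt.mp (fun h => h1 ((hw L).2.mpr h))) (hw L).1
        have hapos : 0 < f L wp := by
          have := (hwp L).2
          simp [Function.update_self] at this
          exact this
        set a := f L wp with ha
        set b := f L w with hb
        refine ⟨⟨a • w + (-b) • wp, ?_⟩, ?_⟩
        · show f L (a • w + (-b) • wp) = 0
          simp only [map_add, _root_.map_smul, smul_eq_mul, ← ha, ← hb]
          ring
        · intro i
          have hupd : Function.update σ L true i.castSucc = σ i.castSucc :=
            Function.update_of_ne (Fin.castSucc_lt_last i).ne _ _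
          have hcomp : (σ ∘ Fin.castSucc) i = σ i.castSucc := rfl
          have hm := hw i.castSucc
          have hp := hwp i.castSucc
          rw [hupd] at hp
          simp only [Submodule.coe_mk, map_add, _root_.map_smul, smul_eq_mul]
          rcases hσi : σ i.castSucc with _ | _
          · -- false : both negative
            have hym : f i.castSucc w < 0 :=
              lt_of_le_of_ne (not_lt.mp (fun h => by simp [hm.2.mpr h] at hσi)) hm.1
            have hyp : f i.castSucc wp < 0 :=
              lt_of_le_of_ne (not_lt.mp (fun h => by simp [hp.2.mpr h] at hσi)) hp.1
            have hneg : a * f i.castSucc w + (-b) * f i.castSucc wp < 0 := by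
              have := mul_pos hapos (neg_pos.mpr hym)
              have := mul_pos (neg_pos.mpr hbneg) (neg_pos.mpr hyp)
              nlinarith
            constructor
            · exact ne_of_lt hneg
            · simp only [hcomp, hσi]
              exact iff_of_false (by simp) (not_lt.mpr hneg.le)
          · -- true : both positive
            have hym : 0 < f i.castSucc w := hm.2.mp (by rw [hσi])
            have hyp : 0 < f i.castSucc wp := hp.2.mp (by rw [hσi])
            have hpos : 0 < a * f i.castSucc w + (-b) * f i.castSucc wp :=
              add_pos (mul_pos hapos hym) (mul_pos (neg_pos.mpr hbneg) hyp)
            constructor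
            · exact ne_of_gt hpos
            · simp only [hcomp, hσi]
              exact iff_of_true trivial hpos
      · left; exact ⟨_, hTmem, by simp [hΦ, h1, h2]⟩
    have hinj : Set.InjOn Φ S := by
      rintro σ hσ τ hτ h
      by_cases hσL : σ L = true <;> by_cases hτL : τ L = true
      · simp [hΦ, hσL, hτL] at h
        exact ext_eq σ τ h (hσL.trans hτL.symm)
      · by_cases hτ2 : Function.update τ L true ∈ S
        · simp [hΦ, hσL, hτL, hτ2] at h
        · simp [hΦ, hσL, hτL, hτ2] at h
          exfalso
          apply hτ2
          have : Function.update τ L true = σ := by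
            apply ext_eq
            · funext i
              simp only [Function.comp_apply]
              rw [Function.update_of_ne (Fin.castSucc_lt_last i).ne]
              exact (congrFun h i).symm
            · rw [Function.update_self, hσL]
          rw [this]; exact hσ
      · by_cases hσ2 : Function.update σ L true ∈ S
        · simp [hΦ, hσL, hτL, hσ2] at h
        · simp [hΦ, hσL, hτL, hσ2] at h
          exfalso
          apply hσ2
          have : Function.update σ L true = τ := by
            apply ext_eq
            · funext i
              simp only [Function.comp_apply]
              rw [Function.update_of_ne (Fin.castSucc_lt_last i).ne]
              exact congrFun h i
            · rw [Function.update_self, hτL]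
          rw [this]; exact hτ
      · by_cases hσ2 : Function.update σ L true ∈ S <;>
          by_cases hτ2 : Function.update τ L true ∈ S <;>
          simp [hΦ, hσL, hτL, hσ2, hτ2] at h
        · exact ext_eq σ τ h (by rw [Bool.not_eq_true] at hσL hτL; rw [hσL, hτL])
        · exact ext_eq σ τ h (by rw [Bool.not_eq_true] at hσL hτL; rw [hσL, hτL])
    have hkey : S.ncard ≤ T.ncard + U.ncard := by
      calc S.ncard ≤ (Sum.inl '' T ∪ Sum.inr '' U : Set _).ncard :=
            Set.ncard_le_ncard_of_injOn Φ hmem hinj (Set.toFinite _)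
        _ ≤ (Sum.inl '' T : Set _).ncard + (Sum.inr '' U : Set _).ncard :=
            Set.ncard_union_le _ _
        _ = T.ncard + U.ncard := by
            rw [Set.ncard_image_of_injective _ Sum.inl_injective,
              Set.ncard_image_of_injective _ Sum.inr_injective]
    have hpascal : ∑ k ∈ Finset.range (e+1), (n+1-1).choose k
        = ∑ k ∈ Finset.range (e+1), (n-1).choose k + ∑ k ∈ Finset.range e, (n-1).choose k := by
      have hn' : n + 1 - 1 = (n-1) + 1 := by omega
      rw [hn', pascal_sum]
    show S.ncard ≤ 2 * ∑ k ∈ Finset.range (e+1), (n+1-1).choose k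
    rw [hpascal]
    omega

/-- The number of realizable strict activation patterns of a central hyperplane
arrangement of `n` nonzero vectors in ℝ^d is at most `2 ∑_{k<d} C(n−1,k)`. -/
theorem stmt9 {n d : ℕ} (hn : 1 ≤ n) (hd : 1 ≤ d)
    (x : Fin n → (Fin d → ℝ)) (hx : ∀ i, x i ≠ 0) :
    {σ : Fin n → Bool | ∃ w : Fin d → ℝ,
        ∀ i, w ⬝ᵥ x i ≠ 0 ∧ (σ i = true ↔ 0 < w ⬝ᵥ x i)}.ncard
      ≤ 2 * ∑ k ∈ Finset.range d, (n - 1).choose k := by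
  have hrk : Module.finrank ℝ (Fin d → ℝ) ≤ d := by
    simp [Module.finrank_pi]
  exact aux n d hd (Fin d → ℝ) hrk (fun i =>
    { toFun := fun w => w ⬝ᵥ x i
      map_add' := fun a b => by simp [add_dotProduct]
      map_smul' := fun c a => by simp [smul_dotProduct] })
end

section
/- Let H be a symmetric positive semidefinite d×d real matrix with an orthonormal eigenbasis e_1, …, e_d, and let w* ∈ ℝ^d with c_k* := ⟨e_k, w*⟩ ≥ 0 for all k. Define g(w) := ⟨w, H(w − w*)⟩. Then: (i) for every w with 0 ≤ ⟨e_k, w⟩ ≤ c_k* for all k (i.e., w in the hyperrectangle of H), one has g(w) ≤ 0; (ii) for every vertex of the hyperrectangle, i.e., every w with ⟨e_k, w⟩ ∈ {0, c_k*} for all k, one has g(w) = 0. Hence the hyperrectangle of H is contained in the norm-increasing ellipsoid {w : g(w) ≤ 0}, and every vertex lies on its boundary. -/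
open Matrix

/-- The hyperrectangle of a symmetric PSD matrix `H` is contained in the
norm-increasing ellipsoid `{w : g(w) ≤ 0}` with `g(w) = ⟨w, H(w − w*)⟩`, and
every vertex of the hyperrectangle lies on its boundary. -/
theorem stmt13 {d : ℕ} (H : Matrix (Fin d) (Fin d) ℝ) (hpsd : H.PosSemidef)
    (e : Fin d → (Fin d → ℝ)) (μ : Fin d → ℝ)
    (heig : ∀ k, H.mulVec (e k) = μ k • e k) (hμ : ∀ k, 0 ≤ μ k)
    (horth : ∀ k l, e k ⬝ᵥ e l = if k = l then (1:ℝ) else 0)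
    (wstar : Fin d → ℝ) (cstar : Fin d → ℝ)
    (hc : ∀ k, cstar k = e k ⬝ᵥ wstar) (hcnn : ∀ k, 0 ≤ cstar k)
    (g : (Fin d → ℝ) → ℝ) (hg : ∀ w, g w = w ⬝ᵥ H.mulVec (w - wstar)) :
    (∀ w : Fin d → ℝ, (∀ k, 0 ≤ e k ⬝ᵥ w ∧ e k ⬝ᵥ w ≤ cstar k) → g w ≤ 0) ∧
    (∀ w : Fin d → ℝ, (∀ k, e k ⬝ᵥ w = 0 ∨ e k ⬝ᵥ w = cstar k) → g w = 0) := by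
  rcases eq_or_ne d 0 with hd | hd
  · subst hd
    constructor <;> intro w _ <;> simp [hg, dotProduct]
  have : Nonempty (Fin d) := ⟨⟨0, Nat.pos_of_ne_zero hd⟩⟩
  -- dot product with a finite sum
  have dsum : ∀ (v : Fin d → ℝ) (s : Finset (Fin d)) (u : Fin d → Fin d → ℝ),
      v ⬝ᵥ (∑ k ∈ s, u k) = ∑ k ∈ s, v ⬝ᵥ u k := by
    intro v s u
    simp only [dotProduct, Finset.sum_apply, Finset.mul_sum]
    exact Finset.sum_comm
  have dsum' : ∀ (v : Fin d → ℝ) (s : Finset (Fin d)) (u : Fin d → Fin d → ℝ),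
      (∑ k ∈ s, u k) ⬝ᵥ v = ∑ k ∈ s, u k ⬝ᵥ v := by
    intro v s u
    rw [dotProduct_comm, dsum]
    simp [dotProduct_comm]
  -- dot of e i with a linear combination of the e's
  have hdot : ∀ (f : Fin d → ℝ) (i : Fin d),
      e i ⬝ᵥ (∑ k, f k • e k) = f i := by
    intro f i
    rw [dsum]
    rw [Finset.sum_eq_single i]
    · simp [horth]
    · intro b _ hb
      simp [horth, Ne.symm hb]
    · simp
  -- linear independence
  have li : LinearIndependent ℝ e := by
    rw [linearIndependent_iff']
    intro s f h i hi
    have h2 := congrArg (fun v => e i ⬝ᵥ v) h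
    simp only [dotProduct_zero] at h2
    rw [dsum] at h2
    rw [Finset.sum_eq_single i] at h2
    · simpa [horth] using h2
    · intro b _ hb
      simp [horth, Ne.symm hb]
    · intro h; exact absurd hi h
  -- basis
  have hcard : Fintype.card (Fin d) = Module.finrank ℝ (Fin d → ℝ) := by simp
  let b := basisOfLinearIndependentOfCardEqFinrank li hcard
  have hb : ⇑b = e := coe_basisOfLinearIndependentOfCardEqFinrank li hcard
  -- expansion of any vector
  have expand : ∀ v : Fin d → ℝ, v = ∑ k, (e k ⬝ᵥ v) • e k := by
    intro v
    conv_lhs => rw [← b.sum_repr v]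
    rw [hb]
    congr 1
    funext k
    congr 1
    have := hdot (fun j => b.repr v j) k
    rw [show (∑ j, b.repr v j • e j) = v by rw [← hb, b.sum_repr]] at this
    rw [this]
  -- key formula
  have key : ∀ w : Fin d → ℝ,
      g w = ∑ k, μ k * (e k ⬝ᵥ w) * (e k ⬝ᵥ w - cstar k) := by
    intro w
    rw [hg]
    conv_lhs => rw [expand (w - wstar)]
    rw [show H.mulVec (∑ k, (e k ⬝ᵥ (w - wstar)) • e k)
        = ∑ k, (e k ⬝ᵥ (w - wstar)) • (μ k • e k) by
      rw [show H.mulVec (∑ k, (e k ⬝ᵥ (w - wstar)) • e k)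
          = ∑ k, H.mulVec ((e k ⬝ᵥ (w - wstar)) • e k) from
        map_sum H.mulVecLin _ _]
      congr 1; funext k
      rw [Matrix.mulVec_smul, heig]]
    rw [dsum]
    congr 1; funext k
    rw [dotProduct_smul, dotProduct_smul, dotProduct_comm, sub_dotProduct, hc k]
    simp only [smul_eq_mul]
    rw [dotProduct_comm w (e k), dotProduct_comm wstar (e k)]
    ring
  constructor
  · intro w hw
    rw [key]
    apply Finset.sum_nonpos
    intro k _
    have h1 := (hw k).1
    have h2 := (hw k).2
    exact mul_nonpos_of_nonneg_of_nonpos (mul_nonneg (hμ k) h1) (by linarith)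
  · intro w hw
    rw [key]
    apply Finset.sum_eq_zero
    intro k _
    rcases hw k with h | h <;> simp [h]
end

section
/- Let H be a symmetric positive semidefinite d×d real matrix and ŵ ∈ ℝ^d. Then the function t ↦ ‖(I − exp(−tH)) ŵ‖ is monotone nondecreasing on [0, ∞): for all 0 ≤ s ≤ t, ‖(I − exp(−sH)) ŵ‖ ≤ ‖(I − exp(−tH)) ŵ‖. In particular, the norm of the gradient flow ẇ = −H(w − ŵ) initialized at w(0) = 0, whose solution is w(t) = (I − exp(−tH)) ŵ, increases monotonically. -/
open Matrix

lemma stmt14_key {d : ℕ} (H : Matrix (Fin d) (Fin d) ℝ) (hH : H.IsHermitian)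
    (what : Fin d → ℝ) (t : ℝ) :
    ((1 - NormedSpace.exp (-(t • H))).mulVec what) ⬝ᵥ
        ((1 - NormedSpace.exp (-(t • H))).mulVec what)
      = ∑ i, ((1 - Real.exp (-(t * hH.eigenvalues i))) *
          ((star (hH.eigenvectorUnitary : Matrix (Fin d) (Fin d) ℝ)) *ᵥ what) i) ^ 2 := by
  set U : Matrix (Fin d) (Fin d) ℝ := (hH.eigenvectorUnitary : Matrix (Fin d) (Fin d) ℝ) with hUdef
  have hsU : star U * U = 1 := Unitary.coe_star_mul_self hH.eigenvectorUnitary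
  have hUs : U * star U = 1 := Unitary.coe_mul_star_self hH.eigenvectorUnitary
  have hUnit : IsUnit U := ⟨⟨U, star U, hUs, hsU⟩, rfl⟩
  have hinv : U⁻¹ = star U := Matrix.inv_eq_right_inv hUs
  have hd2 : -(t • diagonal ((RCLike.ofReal : ℝ → ℝ) ∘ hH.eigenvalues)) =
      diagonal (fun i => -(t * hH.eigenvalues i)) := by
    ext i j
    by_cases h : i = j <;> simp [h, Matrix.diagonal_apply, Function.comp]
  have hdiag : -(t • H) = U * diagonal (fun i => -(t * hH.eigenvalues i)) * U⁻¹ := by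
    rw [hinv]
    conv_lhs => rw [hH.spectral_theorem, Unitary.conjStarAlgAut_apply]
    rw [← hUdef, ← smul_mul_assoc, ← mul_smul_comm, ← neg_mul, ← mul_neg, hd2]
  have hexp : NormedSpace.exp (-(t • H)) =
      U * diagonal (fun i => Real.exp (-(t * hH.eigenvalues i))) * star U := by
    rw [hdiag, Matrix.exp_conj U _ hUnit, Matrix.exp_diagonal, Pi.exp_def, hinv]
    congr 2
    ext i
    rw [← Real.exp_eq_exp_ℝ]
  have hone : (1 : Matrix (Fin d) (Fin d) ℝ) = U * diagonal (fun _ => (1:ℝ)) * star U := by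
    rw [diagonal_one, mul_one, hUs]
  have hM : (1 - NormedSpace.exp (-(t • H))) =
      U * diagonal (fun i => 1 - Real.exp (-(t * hH.eigenvalues i))) * star U := by
    rw [hexp]
    conv_lhs => rw [hone]
    rw [← sub_mul, ← mul_sub, diagonal_sub]
  set v : Fin d → ℝ := (star U) *ᵥ what with hv
  have hmv : (1 - NormedSpace.exp (-(t • H))) *ᵥ what =
      U *ᵥ ((diagonal (fun i => 1 - Real.exp (-(t * hH.eigenvalues i)))) *ᵥ v) := by
    rw [hM, ← mulVec_mulVec, ← mulVec_mulVec]
  rw [hmv]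
  have hUdot : ∀ x : Fin d → ℝ, (U *ᵥ x) ⬝ᵥ (U *ᵥ x) = x ⬝ᵥ x := by
    intro x
    rw [dotProduct_mulVec, ← vecMul_transpose, vecMul_vecMul]
    have hT : Uᵀ = star U := by
      ext i j
      simp [Matrix.star_apply, Matrix.transpose_apply]
    rw [hT, hsU, vecMul_one]
  rw [hUdot]
  simp [dotProduct, mulVec_diagonal, sq, mul_mul_mul_comm]

/-- The Euclidean norm of the gradient flow `w(t) = (I − exp(−tH)) ŵ` of a
quadratic loss initialized at `0` is monotone nondecreasing in `t`. -/
theorem stmt14 {d : ℕ} (H : Matrix (Fin d) (Fin d) ℝ) (hpsd : H.PosSemidef)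
    (what : Fin d → ℝ) :
    ∀ s t : ℝ, 0 ≤ s → s ≤ t →
      Real.sqrt (((1 - NormedSpace.exp (-(s • H))).mulVec what) ⬝ᵥ
          ((1 - NormedSpace.exp (-(s • H))).mulVec what))
        ≤ Real.sqrt (((1 - NormedSpace.exp (-(t • H))).mulVec what) ⬝ᵥ
          ((1 - NormedSpace.exp (-(t • H))).mulVec what)) := by
  intro s t hs hst
  have hH := hpsd.isHermitian
  rw [stmt14_key H hH what s, stmt14_key H hH what t]
  apply Real.sqrt_le_sqrt
  apply Finset.sum_le_sum
  intro i _
  have hev : 0 ≤ hH.eigenvalues i := hpsd.eigenvalues_nonneg i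
  rw [mul_pow, mul_pow]
  apply mul_le_mul_of_nonneg_right _ (sq_nonneg _)
  have h1 : 0 ≤ 1 - Real.exp (-(s * hH.eigenvalues i)) := by
    have : Real.exp (-(s * hH.eigenvalues i)) ≤ 1 :=
      Real.exp_le_one_iff.mpr (by nlinarith)
    linarith
  have h2 : 1 - Real.exp (-(s * hH.eigenvalues i)) ≤
      1 - Real.exp (-(t * hH.eigenvalues i)) := by
    have : Real.exp (-(t * hH.eigenvalues i)) ≤ Real.exp (-(s * hH.eigenvalues i)) :=
      Real.exp_le_exp.mpr (by nlinarith)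
    linarith
  exact pow_le_pow_left₀ h1 h2 2
end

section
/- Fix x_1, …, x_n ∈ ℝ^d and y_1, …, y_n ∈ ℝ; set H = ∑_{i=1}^n x_i x_iᵀ and q = ∑_{i=1}^n y_i x_i. Let w : [0,∞) → ℝ^d be the solution of the linear gradient flow w'(t) = q − H w(t) with w(0) = 0. Then w(t) converges as t → ∞ to a limit ŵ ∈ ℝ^d such that ŵ is a global minimizer of the linear loss L_lin, and ŵ has minimum Euclidean norm among all global minimizers: ‖ŵ‖ ≤ ‖w'‖ for every global minimizer w' of L_lin. -/
open Filter Real Finset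

lemma ode_const' {a : ℝ → ℝ} (hderiv : ∀ t, HasDerivAt a 0 t) (t : ℝ) : a t = a 0 :=
  is_const_of_deriv_eq_zero (fun s => (hderiv s).differentiableAt)
    (fun s => (hderiv s).deriv) t 0

lemma ode_aux {a : ℝ → ℝ} {μ c : ℝ} (hμ : 0 < μ)
    (hderiv : ∀ t, HasDerivAt a (c - μ * a t) t) (h0 : a 0 = 0) :
    Tendsto a atTop (nhds (c / μ)) := by
  set g : ℝ → ℝ := fun t => (a t - c / μ) * Real.exp (μ * t) with hg
  have hgderiv : ∀ t, HasDerivAt g 0 t := by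
    intro t
    have h1 : HasDerivAt (fun t => a t - c / μ) (c - μ * a t) t := (hderiv t).sub_const _
    have h2 : HasDerivAt (fun t => Real.exp (μ * t)) (μ * Real.exp (μ * t)) t := by
      have h := ((hasDerivAt_id t).const_mul μ).exp
      simp only [id, mul_one] at h
      convert h using 1
      ring
    have : HasDerivAt g ((c - μ * a t) * Real.exp (μ * t)
        + (a t - c / μ) * (μ * Real.exp (μ * t))) t := h1.mul h2
    convert this using 1
    linear_combination (Real.exp (μ * t)) * div_mul_cancel₀ c hμ.ne'
  have hgconst : ∀ t, g t = -(c / μ) := by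
    intro t
    have := ode_const' hgderiv t
    simpa [hg, h0] using this
  have ha : ∀ t, a t = c / μ + (-(c / μ)) * Real.exp (-(μ * t)) := by
    intro t
    have hexp : Real.exp (μ * t) ≠ 0 := (Real.exp_pos _).ne'
    have h : (a t - c / μ) * Real.exp (μ * t) = -(c / μ) := hgconst t
    have h3 : -(c / μ) * Real.exp (-(μ * t)) * Real.exp (μ * t)
        = (a t - c / μ) * Real.exp (μ * t) := by
      rw [h, mul_assoc, ← Real.exp_add]; simp
    have h2 := mul_right_cancel₀ hexp h3
    linarith
  have hlim : Tendsto (fun t : ℝ => c / μ + (-(c / μ)) * Real.exp (-(μ * t))) atTop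
      (nhds (c / μ)) := by
    have h1 : Tendsto (fun t : ℝ => μ * t) atTop atTop := tendsto_id.const_mul_atTop hμ
    have h2 : Tendsto (fun t : ℝ => Real.exp (-(μ * t))) atTop (nhds 0) :=
      Real.tendsto_exp_atBot.comp ((tendsto_neg_atTop_atBot).comp h1)
    have h3 : Tendsto (fun t : ℝ => c / μ + (-(c / μ)) * Real.exp (-(μ * t))) atTop
        (nhds (c / μ + (-(c / μ)) * 0)) :=
      tendsto_const_nhds.add (h2.const_mul _)
    simpa using h3
  exact hlim.congr (fun t => (ha t).symm)

/-- The gradient flow of the linear least-squares loss initialized at `0`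
converges to the minimum-Euclidean-norm global minimizer. -/
theorem stmt15 {n d : ℕ} (x : Fin n → EuclideanSpace ℝ (Fin d)) (y : Fin n → ℝ)
    (Llin : EuclideanSpace ℝ (Fin d) → ℝ)
    (hL : ∀ w, Llin w = (1/2 : ℝ) * ∑ i, ((inner ℝ w (x i) : ℝ) - y i)^2)
    (w : ℝ → EuclideanSpace ℝ (Fin d))
    (hw0 : w 0 = 0)
    (hderiv : ∀ t : ℝ, HasDerivAt w
      ((∑ i, y i • x i) - ∑ i, (inner ℝ (w t) (x i) : ℝ) • x i) t) :
    ∃ what : EuclideanSpace ℝ (Fin d),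
      Filter.Tendsto w Filter.atTop (nhds what) ∧
      (∀ w', Llin what ≤ Llin w') ∧
      (∀ w', (∀ w'', Llin w' ≤ Llin w'') → ‖what‖ ≤ ‖w'‖) := by
  classical
  set q : EuclideanSpace ℝ (Fin d) := ∑ i, y i • x i with hqdef
  set T : EuclideanSpace ℝ (Fin d) →ₗ[ℝ] EuclideanSpace ℝ (Fin d) :=
    { toFun := fun v => ∑ i, (inner ℝ v (x i) : ℝ) • x i,
      map_add' := by
        intro u v
        simp [inner_add_left, add_smul, Finset.sum_add_distrib],
      map_smul' := by
        intro c v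
        simp [inner_smul_left, mul_smul, Finset.smul_sum] } with hTdef
  have hTapp : ∀ v, T v = ∑ i, (inner ℝ v (x i) : ℝ) • x i := fun v => rfl
  have hTsymm : T.IsSymmetric := by
    intro u v
    simp only [hTapp, sum_inner, inner_sum, real_inner_smul_left, real_inner_smul_right]
    congr 1
    ext i
    rw [real_inner_comm (x i) v]
    ring
  have hTinner : ∀ v, (inner ℝ (T v) v : ℝ) = ∑ i, (inner ℝ v (x i) : ℝ)^2 := by
    intro v
    simp only [hTapp, sum_inner, real_inner_smul_left]
    congr 1; ext i
    rw [real_inner_comm (x i) v]; ring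
  have hn : Module.finrank ℝ (EuclideanSpace ℝ (Fin d)) = d := finrank_euclideanSpace_fin
  set e := hTsymm.eigenvectorBasis hn with hedef
  set μ := hTsymm.eigenvalues hn with hμdef
  have hTe : ∀ j, T (e j) = μ j • e j := fun j => hTsymm.apply_eigenvectorBasis hn j
  have hμnonneg : ∀ j, 0 ≤ μ j := by
    intro j
    have h1 : (inner ℝ (T (e j)) (e j) : ℝ) = μ j := by
      rw [hTe j, real_inner_smul_left, real_inner_self_eq_norm_sq, e.orthonormal.1 j]
      simp
    have h2 := hTinner (e j)
    rw [h1] at h2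
    rw [h2]
    positivity
  have hker : ∀ j, μ j = 0 → ∀ i, (inner ℝ (e j) (x i) : ℝ) = 0 := by
    intro j hj i
    have h2 := hTinner (e j)
    rw [hTe j, hj, zero_smul, inner_zero_left] at h2
    have := (Finset.sum_eq_zero_iff_of_nonneg (fun i _ => sq_nonneg _)).1 h2.symm i (by simp)
    exact pow_eq_zero_iff (by norm_num) |>.1 this
  have hq0 : ∀ j, μ j = 0 → (inner ℝ q (e j) : ℝ) = 0 := by
    intro j hj
    rw [hqdef, sum_inner]
    apply Finset.sum_eq_zero
    intro i _
    rw [real_inner_smul_left, real_inner_comm, hker j hj i, mul_zero]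
  -- the candidate limit
  set c : Fin d → ℝ := fun j => if μ j = 0 then 0 else (inner ℝ q (e j) : ℝ) / μ j with hcdef
  set what : EuclideanSpace ℝ (Fin d) := ∑ j, c j • e j with hwhatdef
  have hcμ : ∀ j, c j * μ j = (inner ℝ q (e j) : ℝ) := by
    intro j
    by_cases hj : μ j = 0
    · simp only [hcdef, if_pos hj, zero_mul]
      exact (hq0 j hj).symm
    · simp only [hcdef, if_neg hj]
      field_simp
  have hTwhat : T what = q := by
    rw [hwhatdef, map_sum]
    have h1 : ∀ j, T (c j • e j) = ((inner ℝ q (e j) : ℝ)) • e j := by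
      intro j
      rw [map_smul, hTe j, smul_smul, hcμ j]
    rw [Finset.sum_congr rfl (fun j _ => h1 j)]
    have h3 : ∀ j : Fin d, ((inner ℝ q (e j) : ℝ)) • e j = ((inner ℝ (e j) q : ℝ)) • e j :=
      fun j => by rw [real_inner_comm]
    rw [Finset.sum_congr rfl (fun j _ => h3 j)]
    exact e.sum_repr' q
  -- key quadratic expansion
  have key : ∀ v, Llin v = Llin what + (1/2 : ℝ) * ∑ i, ((inner ℝ (v - what) (x i) : ℝ))^2 := by
    intro v
    have hcross : ∑ i, ((inner ℝ what (x i) : ℝ) - y i) * (inner ℝ (v - what) (x i) : ℝ) = 0 := by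
      have h1 : ∑ i, (inner ℝ what (x i) : ℝ) * (inner ℝ (v - what) (x i) : ℝ)
          = (inner ℝ (T what) (v - what) : ℝ) := by
        rw [hTapp, sum_inner]
        congr 1; ext i
        rw [real_inner_smul_left, real_inner_comm (x i) (v - what)]
      have h2 : ∑ i, y i * (inner ℝ (v - what) (x i) : ℝ) = (inner ℝ q (v - what) : ℝ) := by
        rw [hqdef, sum_inner]
        congr 1; ext i
        rw [real_inner_smul_left, real_inner_comm (x i) (v - what)]
      have h3 : ∑ i, ((inner ℝ what (x i) : ℝ) - y i) * (inner ℝ (v - what) (x i) : ℝ)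
          = ∑ i, ((inner ℝ what (x i) : ℝ) * (inner ℝ (v - what) (x i) : ℝ)
            - y i * (inner ℝ (v - what) (x i) : ℝ)) := by
        congr 1; ext i; ring
      rw [h3, Finset.sum_sub_distrib, h1, h2, hTwhat, sub_self]
    rw [hL, hL]
    have hsum : ∑ i, ((inner ℝ v (x i) : ℝ) - y i)^2
        = ∑ i, (((inner ℝ what (x i) : ℝ) - y i)^2
          + 2 * (((inner ℝ what (x i) : ℝ) - y i) * (inner ℝ (v - what) (x i) : ℝ))
          + ((inner ℝ (v - what) (x i) : ℝ))^2) := by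
      congr 1; ext i
      rw [inner_sub_left]
      ring
    rw [hsum, Finset.sum_add_distrib, Finset.sum_add_distrib, ← Finset.mul_sum, hcross]
    ring
  have hmin : ∀ w', Llin what ≤ Llin w' := by
    intro w'
    rw [key w']
    have : (0:ℝ) ≤ (1/2 : ℝ) * ∑ i, ((inner ℝ (w' - what) (x i) : ℝ))^2 := by positivity
    linarith
  -- min-norm
  have hminnorm : ∀ w', (∀ w'', Llin w' ≤ Llin w'') → ‖what‖ ≤ ‖w'‖ := by
    intro w' hw'
    have heq : Llin w' = Llin what := le_antisymm (hw' what) (hmin w')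
    have hzero : ∀ i, (inner ℝ (w' - what) (x i) : ℝ) = 0 := by
      have h1 : ∑ i, ((inner ℝ (w' - what) (x i) : ℝ))^2 = 0 := by
        have := key w'
        rw [heq] at this
        linarith
      intro i
      have := (Finset.sum_eq_zero_iff_of_nonneg (fun i _ => sq_nonneg _)).1 h1 i (by simp)
      exact pow_eq_zero_iff (by norm_num) |>.1 this
    have hTz : T (w' - what) = 0 := by
      rw [hTapp]
      apply Finset.sum_eq_zero
      intro i _
      rw [hzero i, zero_smul]
    have hperp : (inner ℝ what (w' - what) : ℝ) = 0 := by
      rw [hwhatdef, sum_inner]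
      apply Finset.sum_eq_zero
      intro j _
      by_cases hj : μ j = 0
      · simp [hcdef, hj]
      · have h1 : (inner ℝ (e j) (w' - what) : ℝ) = 0 := by
          have h2 : μ j * (inner ℝ (e j) (w' - what) : ℝ) = 0 := by
            have := hTsymm (e j) (w' - what)
            rw [hTe j, hTz, inner_zero_right, real_inner_smul_left] at this
            exact this
          exact (mul_eq_zero.1 h2).resolve_left hj
        rw [real_inner_smul_left, h1, mul_zero]
    have hnormsq : ‖w'‖^2 = ‖what‖^2 + ‖w' - what‖^2 := by
      have h1 : w' = what + (w' - what) := by abel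
      calc ‖w'‖^2 = ‖what + (w' - what)‖^2 := by rw [← h1]
        _ = ‖what‖^2 + 2 * (inner ℝ what (w' - what) : ℝ) + ‖w' - what‖^2 := by
            rw [← real_inner_self_eq_norm_sq, ← real_inner_self_eq_norm_sq,
              ← real_inner_self_eq_norm_sq]
            rw [inner_add_add_self, real_inner_comm (w' - what) what]
            ring
        _ = ‖what‖^2 + ‖w' - what‖^2 := by rw [hperp]; ring
    nlinarith [norm_nonneg w', norm_nonneg what, sq_nonneg ‖w' - what‖]
  -- convergence
  have haderiv : ∀ (j : Fin d) (t : ℝ), HasDerivAt (fun t => (inner ℝ (w t) (e j) : ℝ))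
      ((inner ℝ q (e j) : ℝ) - μ j * (inner ℝ (w t) (e j) : ℝ)) t := by
    intro j t
    have hF := HasDerivAt.inner ℝ (hderiv t) (hasDerivAt_const t (e j))
    have heq : (inner ℝ (w t) (0 : EuclideanSpace ℝ (Fin d)) : ℝ)
        + (inner ℝ (q - ∑ i, (inner ℝ (w t) (x i) : ℝ) • x i) (e j) : ℝ)
        = (inner ℝ q (e j) : ℝ) - μ j * (inner ℝ (w t) (e j) : ℝ) := by
      rw [inner_zero_right, zero_add, inner_sub_left]
      have h2 : (inner ℝ (∑ i, (inner ℝ (w t) (x i) : ℝ) • x i) (e j) : ℝ)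
          = μ j * (inner ℝ (w t) (e j) : ℝ) := by
        have h3 : (inner ℝ (T (w t)) (e j) : ℝ) = (inner ℝ (w t) (T (e j)) : ℝ) :=
          hTsymm (w t) (e j)
        rw [hTe j, real_inner_smul_right] at h3
        rw [← hTapp, h3]
      rw [h2]
    rw [← heq]
    exact hF
  have hterm : ∀ j, Tendsto (fun t => (inner ℝ (w t) (e j) : ℝ)) atTop (nhds (c j)) := by
    intro j
    by_cases hj : μ j = 0
    · have hd0 : ∀ s, HasDerivAt (fun t => (inner ℝ (w t) (e j) : ℝ)) 0 s := by
        intro s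
        have h := haderiv j s
        rwa [hq0 j hj, hj, zero_mul, zero_sub, neg_zero] at h
      have hz : ∀ t, (inner ℝ (w t) (e j) : ℝ) = 0 := by
        intro t
        have h := ode_const' hd0 t
        rwa [hw0, inner_zero_left] at h
      have : c j = 0 := by simp [hcdef, hj]
      rw [this, show (fun t => (inner ℝ (w t) (e j) : ℝ)) = fun _ => (0:ℝ) from funext hz]
      exact tendsto_const_nhds
    · have hμpos : 0 < μ j := lt_of_le_of_ne (hμnonneg j) (Ne.symm hj)
      have h := ode_aux hμpos (fun t => haderiv j t) (by rw [hw0, inner_zero_left])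
      have : c j = (inner ℝ q (e j) : ℝ) / μ j := by simp [hcdef, hj]
      rw [this]
      exact h
  have hrepr : ∀ t, w t = ∑ j, (inner ℝ (w t) (e j) : ℝ) • e j := by
    intro t
    have h3 : ∀ j : Fin d, ((inner ℝ (w t) (e j) : ℝ)) • e j
        = ((inner ℝ (e j) (w t) : ℝ)) • e j := fun j => by rw [real_inner_comm]
    rw [Finset.sum_congr rfl (fun j _ => h3 j)]
    exact (e.sum_repr' (w t)).symm
  have hconv : Tendsto w atTop (nhds what) := by
    have hsum : Tendsto (fun t => ∑ j, (inner ℝ (w t) (e j) : ℝ) • e j) atTop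
        (nhds (∑ j, c j • e j)) :=
      tendsto_finset_sum _ (fun j _ => (hterm j).smul_const (e j))
    rw [hwhatdef]
    exact hsum.congr (fun t => (hrepr t).symm)
  exact ⟨what, hconv, hmin, hminnorm⟩
end

section
/- Let n ≥ 1, let b_1, …, b_n be distinct real numbers, let a_1, …, a_n ∈ ℝ, and let c ∈ ℝ. If the function f(t) = ∑_{i=1}^n a_i e^{b_i t} − c is not identically zero on ℝ, then its zero set {t ∈ ℝ : ∑_{i=1}^n a_i e^{b_i t} = c} is finite and has at most n elements. Moreover, in the homogeneous case c = 0 with not all a_i zero, the zero set has at most n − 1 elements. -/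
open Set Real

private lemma finset_count (F : Finset ℝ) : ∀ T : Finset ℝ,
    (∀ x ∈ F, ∀ y ∈ F, x < y → ∃ t ∈ T, x < t ∧ t < y) → F.card ≤ T.card + 1 := by
  induction F using Finset.strongInduction with
  | _ F ih =>
    intro T hT
    rcases le_or_gt F.card 1 with h1 | h1
    · omega
    · have hne : F.Nonempty := by rw [← Finset.card_pos]; omega
      set m := F.min' hne with hm
      have hmF : m ∈ F := F.min'_mem hne
      have hne2 : (F.erase m).Nonempty := by
        rw [← Finset.card_pos, Finset.card_erase_of_mem hmF]; omega
      set m2 := (F.erase m).min' hne2 with hm2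
      have hm2F : m2 ∈ F.erase m := Finset.min'_mem _ _
      have hm2F' : m2 ∈ F := Finset.mem_of_mem_erase hm2F
      have hlt : m < m2 :=
        lt_of_le_of_ne (F.min'_le _ hm2F') (Finset.ne_of_mem_erase hm2F).symm
      obtain ⟨t, htT, hmt, htm2⟩ := hT m hmF m2 hm2F' hlt
      have key : ∀ x ∈ F.erase m, ∀ y ∈ F.erase m, x < y →
          ∃ t' ∈ T.erase t, x < t' ∧ t' < y := by
        intro x hx y hy hxy
        obtain ⟨t', ht'T, h1', h2'⟩ := hT x (Finset.mem_of_mem_erase hx) y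
          (Finset.mem_of_mem_erase hy) hxy
        refine ⟨t', Finset.mem_erase.2 ⟨?_, ht'T⟩, h1', h2'⟩
        have hx2 : m2 ≤ x := Finset.min'_le _ _ hx
        exact (lt_of_lt_of_le htm2 (hx2.trans h1'.le)).ne'
      have hrec := ih (F.erase m) (Finset.erase_ssubset hmF) (T.erase t) key
      have hTc : 1 ≤ T.card := Finset.card_pos.2 ⟨t, htT⟩
      rw [Finset.card_erase_of_mem hmF, Finset.card_erase_of_mem htT] at hrec
      omega

private lemma rolle_count {S T : Set ℝ} (hT : T.Finite)
    (h : ∀ x ∈ S, ∀ y ∈ S, x < y → ∃ t ∈ T, x < t ∧ t < y) :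
    S.Finite ∧ S.ncard ≤ T.ncard + 1 := by
  have key : ∀ F : Finset ℝ, ↑F ⊆ S → F.card ≤ T.ncard + 1 := by
    intro F hF
    have := finset_count F hT.toFinset (by
      intro x hx y hy hxy
      obtain ⟨t, ht, h1, h2⟩ := h x (hF hx) y (hF hy) hxy
      exact ⟨t, hT.mem_toFinset.2 ht, h1, h2⟩)
    rw [Set.ncard_eq_toFinset_card T hT]
    exact this
  have hSfin : S.Finite := by
    by_contra hS
    have hSinf : S.Infinite := hS
    obtain ⟨F, hFS, hFc⟩ := hSinf.exists_subset_card_eq (T.ncard + 2)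
    have := key F hFS
    omega
  refine ⟨hSfin, ?_⟩
  rw [Set.ncard_eq_toFinset_card S hSfin]
  exact key hSfin.toFinset (by simp)

private lemma exp_poly_zeros : ∀ m : ℕ, ∀ b : Fin m → ℝ, Function.Injective b →
    ∀ a : Fin m → ℝ, (∃ i, a i ≠ 0) →
    {t : ℝ | ∑ i, a i * Real.exp (b i * t) = 0}.Finite ∧
    {t : ℝ | ∑ i, a i * Real.exp (b i * t) = 0}.ncard + 1 ≤ m := by
  intro m
  induction m with
  | zero => rintro b hb a ⟨i, hi⟩; exact absurd i.2 (by omega)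
  | succ m ih =>
    intro b hb a ha
    set bl := b (Fin.last m) with hbl
    set g : ℝ → ℝ := fun t => ∑ i, a i * Real.exp ((b i - bl) * t) with hg
    have hfactor : ∀ t, ∑ i, a i * Real.exp (b i * t) = Real.exp (bl * t) * g t := by
      intro t
      rw [hg, Finset.mul_sum]
      refine Finset.sum_congr rfl fun i _ => ?_
      have h1 : bl * t + (b i - bl) * t = b i * t := by ring
      rw [← mul_assoc, mul_comm (Real.exp (bl * t)) (a i), mul_assoc, ← Real.exp_add, h1]
    have hset : {t : ℝ | ∑ i, a i * Real.exp (b i * t) = 0} = {t | g t = 0} := by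
      ext t
      simp only [Set.mem_setOf_eq, hfactor t, mul_eq_zero]
      exact ⟨fun h => h.resolve_left (Real.exp_ne_zero _), fun h => Or.inr h⟩
    rw [hset]
    set a' : Fin m → ℝ := fun i => a i.castSucc * (b i.castSucc - bl) with ha'
    set b' : Fin m → ℝ := fun i => b i.castSucc - bl with hb'
    have hderiv : ∀ t : ℝ, HasDerivAt g (∑ i : Fin m, a' i * Real.exp (b' i * t)) t := by
      intro t
      have h1 : HasDerivAt g (∑ i : Fin (m + 1),
          a i * (Real.exp ((b i - bl) * t) * (b i - bl))) t := by
        apply HasDerivAt.fun_sum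
        intro i _
        simpa using (((hasDerivAt_id t).const_mul (b i - bl)).exp).const_mul (a i)
      convert h1 using 1
      rw [Fin.sum_univ_castSucc]
      simp only [← hbl, sub_self, zero_mul, mul_zero, add_zero]
      refine Finset.sum_congr rfl fun i _ => ?_
      simp only [ha', hb']
      ring
    by_cases hcase : ∀ i : Fin m, a i.castSucc = 0
    · have hlast : a (Fin.last m) ≠ 0 := by
        obtain ⟨i, hi⟩ := ha
        rcases Fin.eq_castSucc_or_eq_last i with ⟨j, rfl⟩ | rfl
        · exact absurd (hcase j) hi
        · exact hi
      have hgconst : ∀ t, g t = a (Fin.last m) := by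
        intro t
        show ∑ i : Fin (m + 1), a i * Real.exp ((b i - bl) * t) = _
        rw [Fin.sum_univ_castSucc]
        simp [hcase, ← hbl, sub_self]
      have : {t : ℝ | g t = 0} = ∅ := by
        ext t; simp [hgconst t, hlast]
      rw [this]
      simp
    · push_neg at hcase
      obtain ⟨j, hj⟩ := hcase
      have hb'inj : Function.Injective b' := by
        intro i k hik
        have : b i.castSucc = b k.castSucc := by
          have := sub_left_injective hik
          exact this
        exact Fin.castSucc_injective m (hb this)
      have ha'ne : ∃ i, a' i ≠ 0 := by
        refine ⟨j, mul_ne_zero hj (sub_ne_zero.2 fun h => ?_)⟩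
        exact absurd (hb h) (Fin.castSucc_lt_last j).ne
      obtain ⟨hfin', hcard'⟩ := ih b' hb'inj a' ha'ne
      have hrolle : ∀ x ∈ {t : ℝ | g t = 0}, ∀ y ∈ {t : ℝ | g t = 0}, x < y →
          ∃ t ∈ {t : ℝ | ∑ i, a' i * Real.exp (b' i * t) = 0}, x < t ∧ t < y := by
        intro x hx y hy hxy
        have hdiff : Differentiable ℝ g := fun t => (hderiv t).differentiableAt
        have hcont : ContinuousOn g (Set.Icc x y) := hdiff.continuous.continuousOn
        have heq : g x = g y := by rw [hx, hy]
        obtain ⟨t, ht, ht0⟩ := exists_hasDerivAt_eq_zero hxy hcont heq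
          (fun u _ => hderiv u)
        exact ⟨t, ht0, ht.1, ht.2⟩
      obtain ⟨hfin, hcard⟩ := rolle_count hfin' hrolle
      exact ⟨hfin, by omega⟩

/-- An exponential polynomial `∑ aᵢ e^{bᵢ t} − c` with distinct exponents, if
not identically zero, has at most `n` zeros; in the homogeneous case `c = 0`
with not all coefficients zero, it has at most `n − 1` zeros. -/
theorem stmt17 {n : ℕ} (hn : 1 ≤ n) (a b : Fin n → ℝ)
    (hb : Function.Injective b) (c : ℝ) :
    ((¬ ∀ t : ℝ, ∑ i, a i * Real.exp (b i * t) = c) →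
      {t : ℝ | ∑ i, a i * Real.exp (b i * t) = c}.Finite ∧
      {t : ℝ | ∑ i, a i * Real.exp (b i * t) = c}.ncard ≤ n) ∧
    (c = 0 → (∃ i, a i ≠ 0) →
      {t : ℝ | ∑ i, a i * Real.exp (b i * t) = c}.Finite ∧
      {t : ℝ | ∑ i, a i * Real.exp (b i * t) = c}.ncard ≤ n - 1) := by
  constructor
  · intro h
    by_cases h0 : ∃ j, b j = 0
    · obtain ⟨j, hj⟩ := h0
      set A : Fin n → ℝ := fun i => a i - if i = j then c else 0 with hA
      have hsum : ∀ t, ∑ i, A i * Real.exp (b i * t)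
          = (∑ i, a i * Real.exp (b i * t)) - c := by
        intro t
        simp only [hA, sub_mul, Finset.sum_sub_distrib]
        congr 1
        rw [Finset.sum_eq_single j]
        · simp [hj]
        · intro i _ hij; simp [hij]
        · intro hji; exact absurd (Finset.mem_univ j) hji
      have hAne : ∃ i, A i ≠ 0 := by
        by_contra hA0
        push_neg at hA0
        apply h
        intro t
        have := hsum t
        simp only [hA0, zero_mul, Finset.sum_const_zero] at this
        linarith
      obtain ⟨hfin, hcard⟩ := exp_poly_zeros n b hb A hAne
      have hseteq : {t : ℝ | ∑ i, a i * Real.exp (b i * t) = c}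
          = {t : ℝ | ∑ i, A i * Real.exp (b i * t) = 0} := by
        ext t; simp only [Set.mem_setOf_eq, hsum t, sub_eq_zero]
      rw [hseteq]
      exact ⟨hfin, by omega⟩
    · push_neg at h0
      set B : Fin (n + 1) → ℝ := Fin.snoc b 0 with hB
      set A : Fin (n + 1) → ℝ := Fin.snoc a (-c) with hA
      have hBinj : Function.Injective B := by
        intro i k hik
        rcases Fin.eq_castSucc_or_eq_last i with ⟨i', rfl⟩ | rfl <;>
          rcases Fin.eq_castSucc_or_eq_last k with ⟨k', rfl⟩ | rfl
        · simp only [hB, Fin.snoc_castSucc] at hik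
          exact congrArg _ (hb hik)
        · simp only [hB, Fin.snoc_castSucc, Fin.snoc_last] at hik
          exact absurd hik (h0 i')
        · simp only [hB, Fin.snoc_castSucc, Fin.snoc_last] at hik
          exact absurd hik.symm (h0 k')
        · rfl
      have hsum : ∀ t, ∑ i, A i * Real.exp (B i * t)
          = (∑ i, a i * Real.exp (b i * t)) - c := by
        intro t
        rw [Fin.sum_univ_castSucc]
        simp [hA, hB, Fin.snoc_castSucc, Fin.snoc_last]
        ring
      have hAne : ∃ i, A i ≠ 0 := by
        by_contra hA0
        push_neg at hA0
        apply h
        intro t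
        have := hsum t
        simp only [hA0, zero_mul, Finset.sum_const_zero] at this
        linarith
      obtain ⟨hfin, hcard⟩ := exp_poly_zeros (n + 1) B hBinj A hAne
      have hseteq : {t : ℝ | ∑ i, a i * Real.exp (b i * t) = c}
          = {t : ℝ | ∑ i, A i * Real.exp (B i * t) = 0} := by
        ext t; simp only [Set.mem_setOf_eq, hsum t, sub_eq_zero]
      rw [hseteq]
      exact ⟨hfin, by omega⟩
  · rintro rfl ha
    obtain ⟨hfin, hcard⟩ := exp_poly_zeros n b hb a ha
    exact ⟨hfin, by omega⟩
end

section
/- Let H be a symmetric d×d real matrix, let w_0, v ∈ ℝ^d, and let c ∈ ℝ. If the function f(t) = ⟨v, exp(−tH) w_0⟩ − c is not identically zero on ℝ, then f has at most d zeros; i.e., the trajectory t ↦ exp(−tH) w_0 of a linear gradient flow crosses the hyperplane {w : ⟨v, w⟩ = c} at most d times. -/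
open Matrix

/-- Counting lemma: if between any two points of `S` there is a point of the
finite set `T`, then `S` is finite with at most `T.ncard + 1` elements. -/
lemma count_between (S T : Set ℝ) (hT : T.Finite)
    (h : ∀ x ∈ S, ∀ y ∈ S, x < y → ∃ t ∈ T, x < t ∧ t < y) :
    S.Finite ∧ S.ncard ≤ T.ncard + 1 := by
  by_contra hcon
  -- get a Finset `u ⊆ S` with `T.ncard + 2` elements
  obtain ⟨u, huS, hucard⟩ : ∃ u : Finset ℝ, ↑u ⊆ S ∧ u.card = T.ncard + 2 := by
    by_cases hS : S.Finite
    · have hlt : T.ncard + 2 ≤ S.ncard := by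
        by_contra hle
        exact hcon ⟨hS, by omega⟩
      rw [Set.ncard_eq_toFinset_card S hS] at hlt
      obtain ⟨u, hu, hucard⟩ := Finset.exists_subset_card_eq hlt
      exact ⟨u, fun x hx => hS.mem_toFinset.mp (hu hx), hucard⟩
    · obtain ⟨u, hu, hucard⟩ := Set.Infinite.exists_subset_card_eq hS (T.ncard + 2)
      exact ⟨u, hu, hucard⟩
  set e := u.orderIsoOfFin hucard with he
  have hch : ∀ i : Fin (T.ncard + 1),
      ∃ t ∈ T, (e i.castSucc : ℝ) < t ∧ t < (e i.succ : ℝ) := by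
    intro i
    refine h _ (huS (e i.castSucc).2) _ (huS (e i.succ).2) ?_
    have : i.castSucc < i.succ := Fin.castSucc_lt_succ
    exact_mod_cast (e.lt_iff_lt.mpr this)
  choose t htT ht1 ht2 using hch
  have hmono : StrictMono t := by
    intro i j hij
    have h1 : (i.succ : Fin (T.ncard + 2)) ≤ j.castSucc := by
      rw [Fin.succ_le_castSucc_iff]; exact hij
    have h2 : (e i.succ : ℝ) ≤ (e j.castSucc : ℝ) := by
      exact_mod_cast e.le_iff_le.mpr h1
    calc t i < (e i.succ : ℝ) := ht2 i
      _ ≤ (e j.castSucc : ℝ) := h2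
      _ < t j := ht1 j
  have hinj : Function.Injective t := hmono.injective
  have : T.ncard + 1 ≤ T.ncard := by
    have := Finset.card_le_card_of_injOn (s := (Finset.univ : Finset (Fin (T.ncard + 1)))) (t := hT.toFinset) t
      (fun i _ => hT.mem_toFinset.mpr (htT i)) (hinj.injOn)
    simpa [Set.ncard_eq_toFinset_card T hT] using this
  omega

/-- A nonzero exponential polynomial with exponents in `s` has fewer than
`s.card` zeros. -/
lemma expsum_zeros : ∀ (n : ℕ) (s : Finset ℝ) (a : ℝ → ℝ), s.card ≤ n →
    (¬ ∀ t : ℝ, ∑ μ ∈ s, a μ * Real.exp (μ * t) = 0) →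
    {t : ℝ | ∑ μ ∈ s, a μ * Real.exp (μ * t) = 0}.Finite ∧
    {t : ℝ | ∑ μ ∈ s, a μ * Real.exp (μ * t) = 0}.ncard + 1 ≤ n := by
  intro n
  induction n with
  | zero =>
    intro s a hcard hne
    exact absurd (fun t => by simp [Finset.card_eq_zero.mp (Nat.le_zero.mp hcard)]) hne
  | succ n ih =>
    intro s a hcard hne
    by_cases hz : ∃ μ ∈ s, a μ = 0
    · obtain ⟨μ₀, hμ₀s, hμ₀⟩ := hz
      have heq : ∀ t, ∑ μ ∈ s.erase μ₀, a μ * Real.exp (μ * t)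
          = ∑ μ ∈ s, a μ * Real.exp (μ * t) := fun t =>
        Finset.sum_erase s (by simp [hμ₀])
      have hcard' : (s.erase μ₀).card ≤ n := by
        rw [Finset.card_erase_of_mem hμ₀s]; omega
      obtain ⟨h1, h2⟩ := ih (s.erase μ₀) a hcard' (by simpa only [heq] using hne)
      simp only [heq] at h1 h2
      exact ⟨h1, by omega⟩
    · push_neg at hz
      have hsne : s.Nonempty := by
        rcases s.eq_empty_or_nonempty with rfl | h
        · exact absurd (fun t => by simp) hne
        · exact h
      set μ₀ := s.min' hsne with hμ₀def
      have hμ₀s : μ₀ ∈ s := s.min'_mem hsne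
      set g : ℝ → ℝ := fun t => ∑ μ ∈ s, a μ * Real.exp ((μ - μ₀) * t) with hg
      have hFg : ∀ t, ∑ μ ∈ s, a μ * Real.exp (μ * t) = Real.exp (μ₀ * t) * g t := by
        intro t
        rw [hg, Finset.mul_sum]
        refine Finset.sum_congr rfl fun μ _ => ?_
        have h2 : (μ - μ₀) * t + μ₀ * t = μ * t := by ring
        rw [mul_comm (Real.exp (μ₀ * t)), mul_assoc, ← Real.exp_add, h2]
      have hZ : {t : ℝ | ∑ μ ∈ s, a μ * Real.exp (μ * t) = 0} = {t : ℝ | g t = 0} := by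
        ext t; simp [hFg t, Real.exp_ne_zero]
      set s' : Finset ℝ := (s.erase μ₀).image (· - μ₀) with hs'
      set a' : ℝ → ℝ := fun ν => a (ν + μ₀) * ν with ha'
      have hsub_inj : Function.Injective (· - μ₀) := sub_left_injective
      have hg' : ∀ t, HasDerivAt g (∑ ν ∈ s', a' ν * Real.exp (ν * t)) t := by
        intro t
        have h1 : HasDerivAt g (∑ μ ∈ s, a μ * (Real.exp ((μ - μ₀) * t) * (μ - μ₀))) t := by
          apply HasDerivAt.fun_sum
          intro μ _
          have : HasDerivAt (fun t : ℝ => (μ - μ₀) * t) (μ - μ₀) t := by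
            simpa using (hasDerivAt_id t).const_mul (μ - μ₀)
          exact (this.exp).const_mul (a μ)
        convert h1 using 1
        rw [hs', Finset.sum_image (fun x _ y _ h => hsub_inj h)]
        rw [← Finset.sum_erase (a := μ₀) s (f := fun μ => a μ * (Real.exp ((μ - μ₀) * t) * (μ - μ₀)))
          (by simp)]
        refine (Finset.sum_congr rfl fun μ hμ => ?_)
        simp only [ha', sub_add_cancel]
        ring
      by_cases hz' : ∀ t : ℝ, ∑ ν ∈ s', a' ν * Real.exp (ν * t) = 0
      · have hdiff : Differentiable ℝ g := fun t => (hg' t).differentiableAt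
        have hconst : ∀ t : ℝ, g t = g 0 := by
          intro t
          apply is_const_of_deriv_eq_zero hdiff
          intro x
          rw [(hg' x).deriv, hz' x]
        by_cases hg0 : g 0 = 0
        · exact absurd (fun t => by rw [hFg t, hconst t, hg0, mul_zero]) hne
        · have : {t : ℝ | g t = 0} = ∅ := by
            ext t; simp [hconst t, hg0]
          rw [hZ, this]
          simp
      · have hcard' : s'.card ≤ n := by
          have h1 : s'.card ≤ (s.erase μ₀).card := Finset.card_image_le
          rw [Finset.card_erase_of_mem hμ₀s] at h1
          have := Finset.card_pos.mpr hsne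
          omega
        obtain ⟨hfin', hncard'⟩ := ih s' a' hcard' hz'
        set T := {t : ℝ | ∑ ν ∈ s', a' ν * Real.exp (ν * t) = 0}
        have hcont : Continuous g := by
          rw [continuous_iff_continuousAt]
          exact fun t => (hg' t).continuousAt
        have hbet : ∀ x ∈ {t : ℝ | g t = 0}, ∀ y ∈ {t : ℝ | g t = 0}, x < y →
            ∃ t ∈ T, x < t ∧ t < y := by
          intro x hx y hy hxy
          obtain ⟨z, hz_mem, hz_eq⟩ := exists_hasDerivAt_eq_zero hxy
            hcont.continuousOn (by rw [Set.mem_setOf_eq.mp hx, Set.mem_setOf_eq.mp hy])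
            (fun w _ => hg' w)
          exact ⟨z, hz_eq, hz_mem.1, hz_mem.2⟩
        obtain ⟨hfin, hle⟩ := count_between _ T hfin' hbet
        rw [hZ]
        exact ⟨hfin, by omega⟩

/-- The trajectory `t ↦ exp(−tH) w₀` of a linear gradient flow with symmetric
`H` crosses any hyperplane `{w : ⟨v, w⟩ = c}` at most `d` times (unless it stays
on it). -/
theorem stmt18 {d : ℕ} (H : Matrix (Fin d) (Fin d) ℝ) (hsym : H.IsSymm)
    (w0 v : Fin d → ℝ) (c : ℝ)
    (hne : ¬ ∀ t : ℝ, v ⬝ᵥ (NormedSpace.exp (-(t • H))).mulVec w0 = c) :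
    {t : ℝ | v ⬝ᵥ (NormedSpace.exp (-(t • H))).mulVec w0 = c}.Finite ∧
    {t : ℝ | v ⬝ᵥ (NormedSpace.exp (-(t • H))).mulVec w0 = c}.ncard ≤ d := by
  have hH : H.IsHermitian := by
    rw [Matrix.IsHermitian, conjTranspose_eq_transpose_of_trivial]; exact hsym
  set U : Matrix (Fin d) (Fin d) ℝ := (hH.eigenvectorUnitary : Matrix (Fin d) (Fin d) ℝ) with hU
  set ev : Fin d → ℝ := hH.eigenvalues with hev
  have hspec : H = U * diagonal ev * star U := by
    have := hH.spectral_theorem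
    rwa [RCLike.ofReal_real_eq_id, Function.id_comp] at this
  have hUunit : IsUnit U := ⟨Unitary.toUnits hH.eigenvectorUnitary, rfl⟩
  have hUinv : U⁻¹ = star U :=
    Matrix.inv_eq_left_inv (Unitary.coe_star_mul_self hH.eigenvectorUnitary)
  have key : ∀ t : ℝ, -(t • H) = U * diagonal (fun i => -ev i * t) * U⁻¹ := by
    intro t
    have h1 : diagonal (fun i => -ev i * t) = -(t • diagonal ev) := by
      ext i j
      rcases eq_or_ne i j with rfl | hij
      · simp; ring
      · simp [Matrix.diagonal_apply_ne _ hij]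
    rw [h1, hUinv, hspec, mul_neg, neg_mul, mul_smul_comm, smul_mul_assoc]
  set p : Fin d → ℝ := v ᵥ* U with hp
  set q : Fin d → ℝ := (star U) *ᵥ w0 with hq
  have hval : ∀ t : ℝ, v ⬝ᵥ (NormedSpace.exp (-(t • H))).mulVec w0
      = ∑ i, (p i * q i) * Real.exp (-ev i * t) := by
    intro t
    rw [key t, Matrix.exp_conj U _ hUunit, Matrix.exp_diagonal, hUinv]
    rw [Pi.exp_def, ← Matrix.mulVec_mulVec, ← Matrix.mulVec_mulVec,
      dotProduct_mulVec]
    simp only [dotProduct, Matrix.mulVec_diagonal, ← Real.exp_eq_exp_ℝ]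
    exact Finset.sum_congr rfl fun i _ => by ring
  classical
  set s : Finset ℝ := (Finset.image (fun i => -ev i) Finset.univ) ∪ {0} with hs
  set b : ℝ → ℝ := fun μ =>
    (∑ i ∈ Finset.univ.filter (fun i => -ev i = μ), p i * q i)
      - (if μ = 0 then c else 0) with hb
  have h0s : (0 : ℝ) ∈ s := by simp [hs]
  have hFb : ∀ t : ℝ, ∑ μ ∈ s, b μ * Real.exp (μ * t)
      = (∑ i, (p i * q i) * Real.exp (-ev i * t)) - c := by
    intro t
    simp only [hb, sub_mul]
    rw [Finset.sum_sub_distrib]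
    congr 1
    · rw [← Finset.sum_fiberwise_of_maps_to
        (g := fun i => -ev i) (t := s) (fun i _ => by simp [hs])
        (f := fun i => (p i * q i) * Real.exp (-ev i * t))]
      refine Finset.sum_congr rfl fun μ _ => ?_
      rw [Finset.sum_mul]
      refine Finset.sum_congr rfl fun i hi => ?_
      rw [(Finset.mem_filter.mp hi).2]
    · rw [Finset.sum_eq_single_of_mem 0 h0s (fun μ _ hμ => by simp [hμ])]
      simp
  have hset : {t : ℝ | v ⬝ᵥ (NormedSpace.exp (-(t • H))).mulVec w0 = c}
      = {t : ℝ | ∑ μ ∈ s, b μ * Real.exp (μ * t) = 0} := by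
    ext t
    simp only [Set.mem_setOf_eq, hFb t, hval t, sub_eq_zero]
  have hne' : ¬ ∀ t : ℝ, ∑ μ ∈ s, b μ * Real.exp (μ * t) = 0 := by
    intro hall
    exact hne fun t => by
      have := hall t
      rw [hFb t, sub_eq_zero] at this
      rw [hval t, this]
  have hcard : s.card ≤ d + 1 := by
    calc s.card ≤ (Finset.image (fun i => -ev i) Finset.univ).card + ({0} : Finset ℝ).card :=
          Finset.card_union_le _ _
      _ ≤ d + 1 := by
          have := Finset.card_image_le (f := fun i => -ev i) (s := (Finset.univ : Finset (Fin d)))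
          simp only [Finset.card_univ, Fintype.card_fin] at this
          simpa using this
  obtain ⟨hfin, hle⟩ := expsum_zeros (d + 1) s b hcard hne'
  rw [hset]
  exact ⟨hfin, by omega⟩
end
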